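/- Up to lattice equivalence (unimodular affine transformations of ℤ²), the maximal hyperelliptic lattice polygons of genus g ≥ 2 are exactly the g+2 polygons E_k = conv((0,0), (0,2), (g+k,0), (g+2-k,2)) for 1 ≤ k ≤ g+2. In particular, each E_k has exactly g interior lattice points, all lying on the line y = 1. -/

import Mathlib

open Set Finset

noncomputable section

/-- A lattice point viewed as a point of the real plane. -/
def toR (p : ℤ × ℤ) : ℝ × ℝ := ((p.1 : ℝ), (p.2 : ℝ))

/-- The real convex hull of a finite set of lattice points. -/
def polyHull (V : Finset (ℤ × ℤ)) : Set (ℝ × ℝ) :=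
  convexHull ℝ (toR '' (V : Set (ℤ × ℤ)))

/-- `V` spans a two-dimensional (lattice) polygon. -/
def IsLatticePolygon (V : Finset (ℤ × ℤ)) : Prop :=
  ∃ p q r : ℤ × ℤ, p ∈ V ∧ q ∈ V ∧ r ∈ V ∧
    AffineIndependent ℝ ![toR p, toR q, toR r]

/-- Interior lattice points of the polygon spanned by `V`. -/
def intPts (V : Finset (ℤ × ℤ)) : Set (ℤ × ℤ) :=
  {p | toR p ∈ interior (polyHull V)}

/-- Boundary lattice points of the polygon spanned by `V`. -/
def bdPts (V : Finset (ℤ × ℤ)) : Set (ℤ × ℤ) :=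
  {p | toR p ∈ frontier (polyHull V)}

/-- All lattice points of the polygon spanned by `V`. -/
def latPts (V : Finset (ℤ × ℤ)) : Set (ℤ × ℤ) :=
  {p | toR p ∈ polyHull V}

/-- The interior polygon: convex hull of the interior lattice points. -/
def intPoly (V : Finset (ℤ × ℤ)) : Set (ℝ × ℝ) :=
  convexHull ℝ (toR '' intPts V)

/-- `Δ` is nonhyperelliptic: its interior polygon is two-dimensional. -/
def Nonhyperelliptic (V : Finset (ℤ × ℤ)) : Prop :=
  ∃ p q r : ℤ × ℤ, p ∈ intPts V ∧ q ∈ intPts V ∧ r ∈ intPts V ∧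
    AffineIndependent ℝ ![toR p, toR q, toR r]

/-- A lattice polygon is hyperelliptic if it has at least two interior lattice
points and they are all collinear. -/
def Hyperelliptic (V : Finset (ℤ × ℤ)) : Prop :=
  2 ≤ (intPts V).ncard ∧ Collinear ℝ (toR '' intPts V)

/-- A lattice polygon is maximal if it is not properly contained in another
lattice polygon with the same interior lattice points. -/
def MaximalPoly (V : Finset (ℤ × ℤ)) : Prop :=
  IsLatticePolygon V ∧ ¬ ∃ W : Finset (ℤ × ℤ), IsLatticePolygon W ∧
    polyHull V ⊂ polyHull W ∧ intPts W = intPts V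

/-- A unimodular affine map `x ↦ Ax + b` of `ℤ²`. -/
def unimodMap (a b c d e f : ℤ) (p : ℤ × ℤ) : ℤ × ℤ :=
  (a * p.1 + b * p.2 + e, c * p.1 + d * p.2 + f)

/-- Lattice equivalence of lattice polygons: a unimodular affine transformation
carries the lattice points of one onto the lattice points of the other. -/
def LatEquiv (V W : Finset (ℤ × ℤ)) : Prop :=
  ∃ a b c d e f : ℤ, (a * d - b * c = 1 ∨ a * d - b * c = -1) ∧
    unimodMap a b c d e f '' latPts V = latPts W

/-- The maximal hyperelliptic polygon
`E_k = conv((0,0), (0,2), (g+k,0), (g+2-k,2))`. -/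
def EkVerts (g k : ℤ) : Finset (ℤ × ℤ) :=
  {(0, 0), (0, 2), (g + k, 0), (g + 2 - k, 2)}

/-- the real affine map corresponding to a `unimodMap`. -/
def umAff (a b c d e f : ℤ) : (ℝ × ℝ) →ᵃ[ℝ] (ℝ × ℝ) where
  toFun p := ((a : ℝ) * p.1 + (b : ℝ) * p.2 + (e : ℝ), (c : ℝ) * p.1 + (d : ℝ) * p.2 + (f : ℝ))
  linear := {
    toFun := fun p => ((a : ℝ) * p.1 + (b : ℝ) * p.2, (c : ℝ) * p.1 + (d : ℝ) * p.2)
    map_add' := by intro p q; simp [Prod.ext_iff]; constructor <;> ring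
    map_smul' := by intro t p; simp [Prod.ext_iff, Prod.smul_def, smul_eq_mul]; constructor <;> ring }
  map_vadd' := by
    intro p v
    simp [Prod.ext_iff, Prod.smul_def]
    constructor <;> ring

lemma umAff_apply (a b c d e f : ℤ) (z : ℝ × ℝ) :
    umAff a b c d e f z = ((a : ℝ) * z.1 + (b : ℝ) * z.2 + (e : ℝ),
      (c : ℝ) * z.1 + (d : ℝ) * z.2 + (f : ℝ)) := rfl

lemma umAff_toR (a b c d e f : ℤ) (p : ℤ × ℤ) :
    umAff a b c d e f (toR p) = toR (unimodMap a b c d e f p) := by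
  simp [umAff_apply, toR, unimodMap]

lemma umAff_cont (a b c d e f : ℤ) : Continuous (umAff a b c d e f) :=
  (umAff a b c d e f).continuous_of_finiteDimensional

/-- inverse tuple data -/
lemma unimod_inverse {a b c d e f : ℤ} (h : a * d - b * c = 1 ∨ a * d - b * c = -1) :
    ∃ a' b' c' d' e' f' : ℤ,
      (a' * d' - b' * c' = 1 ∨ a' * d' - b' * c' = -1) ∧
      (∀ p, unimodMap a' b' c' d' e' f' (unimodMap a b c d e f p) = p) ∧
      (∀ p, unimodMap a b c d e f (unimodMap a' b' c' d' e' f' p) = p) ∧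
      (∀ z, umAff a' b' c' d' e' f' (umAff a b c d e f z) = z) ∧
      (∀ z, umAff a b c d e f (umAff a' b' c' d' e' f' z) = z) := by
  have hδ2 : (a * d - b * c) * (a * d - b * c) = 1 := by
    rcases h with h | h <;> rw [h] <;> ring
  have hδ2R : ((a : ℝ) * d - b * c) * ((a : ℝ) * d - b * c) = 1 := by
    exact_mod_cast congrArg (fun n : ℤ => (n : ℝ)) hδ2
  refine ⟨(a * d - b * c) * d, -((a * d - b * c) * b), -((a * d - b * c) * c),
    (a * d - b * c) * a, (a * d - b * c) * (b * f - d * e),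
    (a * d - b * c) * (c * e - a * f), ?_, ?_, ?_, ?_, ?_⟩
  · rcases h with h | h
    · left; linear_combination ((a * d - b * c) ^ 2 + (a * d - b * c) + 1) * h
    · right; linear_combination ((a * d - b * c) ^ 2 - (a * d - b * c) + 1) * h
  · intro p
    simp only [unimodMap, Prod.ext_iff]
    constructor
    · linear_combination p.1 * hδ2
    · linear_combination p.2 * hδ2
  · intro p
    simp only [unimodMap, Prod.ext_iff]
    constructor
    · linear_combination (p.1 - e) * hδ2
    · linear_combination (p.2 - f) * hδ2
  · intro z
    simp only [umAff_apply, Prod.ext_iff]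
    push_cast
    constructor
    · linear_combination z.1 * hδ2R
    · linear_combination z.2 * hδ2R
  · intro z
    simp only [umAff_apply, Prod.ext_iff]
    push_cast
    constructor
    · linear_combination (z.1 - (e : ℝ)) * hδ2R
    · linear_combination (z.2 - (f : ℝ)) * hδ2R

lemma toR_inj : Function.Injective toR := by
  intro p q h
  simp only [toR, Prod.ext_iff] at h ⊢
  exact_mod_cast h

section Transfer

variable {a b c d e f : ℤ} {V W : Finset (ℤ × ℤ)}

lemma toR_image_image (σfun : ℤ × ℤ → ℤ × ℤ) (hcomm : ∀ p, umAff a b c d e f (toR p) = toR (σfun p))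
    (S : Set (ℤ × ℤ)) : toR '' (σfun '' S) = umAff a b c d e f '' (toR '' S) := by
  rw [Set.image_image, Set.image_image]
  exact Set.image_congr fun p _ => (hcomm p).symm

lemma polyHull_image (V : Finset (ℤ × ℤ)) (a b c d e f : ℤ) :
    polyHull (V.image (unimodMap a b c d e f)) = umAff a b c d e f '' polyHull V := by
  unfold polyHull
  rw [Finset.coe_image, toR_image_image (unimodMap a b c d e f) (umAff_toR a b c d e f),
    AffineMap.image_convexHull]

/-- bundled data of an invertible unimodular map. -/
structure UMPair (a b c d e f a' b' c' d' e' f' : ℤ) : Prop where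
  det : a * d - b * c = 1 ∨ a * d - b * c = -1
  det' : a' * d' - b' * c' = 1 ∨ a' * d' - b' * c' = -1
  li : ∀ p, unimodMap a' b' c' d' e' f' (unimodMap a b c d e f p) = p
  ri : ∀ p, unimodMap a b c d e f (unimodMap a' b' c' d' e' f' p) = p
  liR : ∀ z, umAff a' b' c' d' e' f' (umAff a b c d e f z) = z
  riR : ∀ z, umAff a b c d e f (umAff a' b' c' d' e' f' z) = z

lemma exists_umpair {a b c d e f : ℤ} (h : a * d - b * c = 1 ∨ a * d - b * c = -1) :
    ∃ a' b' c' d' e' f', UMPair a b c d e f a' b' c' d' e' f' := by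
  obtain ⟨a', b', c', d', e', f', hdet, li, ri, liR, riR⟩ := unimod_inverse h
  exact ⟨a', b', c', d', e', f', ⟨h, hdet, li, ri, liR, riR⟩⟩

variable {a' b' c' d' e' f' : ℤ}

lemma UMPair.homeo (hU : UMPair a b c d e f a' b' c' d' e' f') :
    ∃ H : Homeomorph (ℝ × ℝ) (ℝ × ℝ), ∀ z, H z = umAff a b c d e f z := by
  refine ⟨⟨⟨umAff a b c d e f, umAff a' b' c' d' e' f', fun z => hU.liR z, fun z => hU.riR z⟩,
    umAff_cont a b c d e f, umAff_cont a' b' c' d' e' f'⟩, fun z => rfl⟩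

lemma UMPair.image_interior (hU : UMPair a b c d e f a' b' c' d' e' f') (S : Set (ℝ × ℝ)) :
    interior (umAff a b c d e f '' S) = umAff a b c d e f '' interior S := by
  obtain ⟨H, hH⟩ := hU.homeo
  have h1 : umAff a b c d e f '' S = H '' S := Set.image_congr fun z _ => (hH z).symm
  have h2 : umAff a b c d e f '' interior S = H '' interior S :=
    Set.image_congr fun z _ => (hH z).symm
  rw [h1, h2, ← Homeomorph.image_interior]

lemma UMPair.intPts_image (hU : UMPair a b c d e f a' b' c' d' e' f') (V : Finset (ℤ × ℤ)) :
    intPts (V.image (unimodMap a b c d e f)) = unimodMap a b c d e f '' intPts V := by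
  ext m
  simp only [intPts, Set.mem_setOf_eq, Set.mem_image]
  rw [polyHull_image, hU.image_interior]
  constructor
  · rintro ⟨z, hz, hzm⟩
    obtain ⟨p, hp⟩ : ∃ p : ℤ × ℤ, z = toR p := by
      refine ⟨unimodMap a' b' c' d' e' f' m, ?_⟩
      have := congrArg (umAff a' b' c' d' e' f') hzm
      rw [hU.liR z] at this
      rw [this, umAff_toR]
    refine ⟨p, by rwa [hp] at hz, ?_⟩
    have : umAff a b c d e f z = toR (unimodMap a b c d e f p) := by rw [hp, umAff_toR]
    rw [hzm] at this
    exact toR_inj this.symm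
  · rintro ⟨p, hp, rfl⟩
    exact ⟨toR p, hp, umAff_toR a b c d e f p⟩

lemma UMPair.latPts_image (hU : UMPair a b c d e f a' b' c' d' e' f') (V : Finset (ℤ × ℤ)) :
    latPts (V.image (unimodMap a b c d e f)) = unimodMap a b c d e f '' latPts V := by
  ext m
  simp only [latPts, Set.mem_setOf_eq, Set.mem_image]
  rw [polyHull_image]
  constructor
  · rintro ⟨z, hz, hzm⟩
    obtain ⟨p, hp⟩ : ∃ p : ℤ × ℤ, z = toR p := by
      refine ⟨unimodMap a' b' c' d' e' f' m, ?_⟩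
      have := congrArg (umAff a' b' c' d' e' f') hzm
      rw [hU.liR z] at this
      rw [this, umAff_toR]
    refine ⟨p, by rwa [hp] at hz, ?_⟩
    have : umAff a b c d e f z = toR (unimodMap a b c d e f p) := by rw [hp, umAff_toR]
    rw [hzm] at this
    exact toR_inj this.symm
  · rintro ⟨p, hp, rfl⟩
    exact ⟨toR p, hp, umAff_toR a b c d e f p⟩

end Transfer

section Quad

/-- The quadrilateral region `conv((p,0),(q,0),(r,2),(s,2))` as an inequality system. -/
def quadR (p q r s : ℝ) : Set (ℝ × ℝ) :=
  {z | 0 ≤ z.2 ∧ z.2 ≤ 2 ∧ p ≤ z.1 - (r - p) / 2 * z.2 ∧ z.1 - (s - q) / 2 * z.2 ≤ q}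

lemma quadR_convex (p q r s : ℝ) : Convex ℝ (quadR p q r s) := by
  rintro x ⟨hx1, hx2, hx3, hx4⟩ y ⟨hy1, hy2, hy3, hy4⟩ u v hu hv huv
  have h1 : (u • x + v • y).1 = u * x.1 + v * y.1 := rfl
  have h2 : (u • x + v • y).2 = u * x.2 + v * y.2 := rfl
  have t1 := mul_le_mul_of_nonneg_left hx3 hu
  have t2 := mul_le_mul_of_nonneg_left hy3 hv
  have t3 := mul_le_mul_of_nonneg_left hx4 hu
  have t4 := mul_le_mul_of_nonneg_left hy4 hv
  refine ⟨?_, ?_, ?_, ?_⟩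
  · rw [h2]
    have := add_le_add (mul_le_mul_of_nonneg_left hx1 hu) (mul_le_mul_of_nonneg_left hy1 hv)
    simpa using this
  · rw [h2]
    calc u * x.2 + v * y.2 ≤ u * 2 + v * 2 :=
          add_le_add (mul_le_mul_of_nonneg_left hx2 hu) (mul_le_mul_of_nonneg_left hy2 hv)
      _ = 2 := by linear_combination 2 * huv
  · rw [h1, h2]
    calc p = u * p + v * p := by linear_combination (-p) * huv
      _ ≤ u * (x.1 - (r - p) / 2 * x.2) + v * (y.1 - (r - p) / 2 * y.2) := add_le_add t1 t2
      _ = u * x.1 + v * y.1 - (r - p) / 2 * (u * x.2 + v * y.2) := by ring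
  · rw [h1, h2]
    calc u * x.1 + v * y.1 - (s - q) / 2 * (u * x.2 + v * y.2)
        = u * (x.1 - (s - q) / 2 * x.2) + v * (y.1 - (s - q) / 2 * y.2) := by ring
      _ ≤ u * q + v * q := add_le_add t3 t4
      _ = q := by linear_combination q * huv

lemma quadR_mem_verts (p q r s : ℝ) (hpq : p ≤ q) (hrs : r ≤ s) :
    (p, (0:ℝ)) ∈ quadR p q r s ∧ (q, (0:ℝ)) ∈ quadR p q r s ∧
    (r, (2:ℝ)) ∈ quadR p q r s ∧ (s, (2:ℝ)) ∈ quadR p q r s := by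
  refine ⟨⟨le_rfl, by norm_num, by norm_num, by norm_num; linarith⟩,
    ⟨le_rfl, by norm_num, by norm_num; linarith, by norm_num⟩,
    ⟨by norm_num, le_rfl, by norm_num, by norm_num; linarith⟩,
    ⟨by norm_num, le_rfl, by norm_num; linarith, by norm_num⟩⟩

lemma quadHull (p q r s : ℝ) (hpq : p ≤ q) (hrs : r ≤ s) :
    convexHull ℝ ({(p, 0), (q, 0), (r, 2), (s, 2)} : Set (ℝ × ℝ)) = quadR p q r s := by
  obtain ⟨h1, h2, h3, h4⟩ := quadR_mem_verts p q r s hpq hrs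
  apply le_antisymm
  · apply convexHull_min _ (quadR_convex p q r s)
    rintro z (rfl | rfl | rfl | rfl) <;> assumption
  · -- every point of quadR is in the hull
    intro z hz
    obtain ⟨hz1, hz2, hz3, hz4⟩ := hz
    set C := convexHull ℝ ({(p, 0), (q, 0), (r, 2), (s, 2)} : Set (ℝ × ℝ)) with hC
    have hCc : Convex ℝ C := convex_convexHull _ _
    have mp : (p, (0:ℝ)) ∈ C := subset_convexHull _ _ (by simp)
    have mq : (q, (0:ℝ)) ∈ C := subset_convexHull _ _ (by simp)
    have mr : (r, (2:ℝ)) ∈ C := subset_convexHull _ _ (by simp)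
    have ms : (s, (2:ℝ)) ∈ C := subset_convexHull _ _ (by simp)
    set t : ℝ := z.2 / 2 with ht
    have ht0 : 0 ≤ t := by positivity
    have ht1 : t ≤ 1 := by rw [ht]; linarith
    -- left and right points at height z.2
    have hL : ((1 - t) • ((p : ℝ), (0:ℝ)) + t • ((r : ℝ), (2:ℝ))) ∈ C :=
      hCc mp mr (by linarith) ht0 (by ring)
    have hR : ((1 - t) • ((q : ℝ), (0:ℝ)) + t • ((s : ℝ), (2:ℝ))) ∈ C :=
      hCc mq ms (by linarith) ht0 (by ring)
    have hLval : ((1 - t) • ((p : ℝ), (0:ℝ)) + t • ((r : ℝ), (2:ℝ))) =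
        (p + (r - p) * t, z.2) := by
      simp [Prod.ext_iff, Prod.smul_def, smul_eq_mul]
      constructor
      · ring
      · rw [ht]; ring
    have hRval : ((1 - t) • ((q : ℝ), (0:ℝ)) + t • ((s : ℝ), (2:ℝ))) =
        (q + (s - q) * t, z.2) := by
      simp [Prod.ext_iff, Prod.smul_def, smul_eq_mul]
      constructor
      · ring
      · rw [ht]; ring
    rw [hLval] at hL
    rw [hRval] at hR
    set L : ℝ := p + (r - p) * t with hLd
    set R : ℝ := q + (s - q) * t with hRd
    have hzL : L ≤ z.1 := by rw [hLd, ht]; linarith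
    have hzR : z.1 ≤ R := by rw [hRd, ht]; linarith
    have hLR : L ≤ R := le_trans hzL hzR
    rcases eq_or_lt_of_le hLR with heq | hlt
    · have hz1L : z.1 = L := by rw [← heq] at hzR; exact le_antisymm hzR hzL
      have : ((L : ℝ), z.2) = z := by rw [← hz1L]
      rw [← this]; exact hL
    · set μ : ℝ := (z.1 - L) / (R - L) with hμ
      have hμ0 : 0 ≤ μ := by apply div_nonneg <;> linarith
      have hμ1 : μ ≤ 1 := by rw [hμ, div_le_one (by linarith)]; linarith
      have hμRL : μ * (R - L) = z.1 - L := by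
        rw [hμ]; exact div_mul_cancel₀ _ (by linarith)
      have hcombo : (1 - μ) • ((L : ℝ), z.2) + μ • ((R : ℝ), z.2)
          = ((1 - μ) * L + μ * R, (1 - μ) * z.2 + μ * z.2) := rfl
      have : (1 - μ) • ((L : ℝ), z.2) + μ • ((R : ℝ), z.2) = z := by
        rw [hcombo, Prod.ext_iff]
        constructor
        · show (1 - μ) * L + μ * R = z.1
          linear_combination hμRL
        · show (1 - μ) * z.2 + μ * z.2 = z.2
          ring
      rw [← this]
      exact hCc hL hR (by linarith) hμ0 (by ring)

/-- strict region -/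
def quadRs (p q r s : ℝ) : Set (ℝ × ℝ) :=
  {z | 0 < z.2 ∧ z.2 < 2 ∧ p < z.1 - (r - p) / 2 * z.2 ∧ z.1 - (s - q) / 2 * z.2 < q}

lemma quadRs_open (p q r s : ℝ) : IsOpen (quadRs p q r s) := by
  have h1 : Continuous fun z : ℝ × ℝ => z.2 := continuous_snd
  have h2 : Continuous fun z : ℝ × ℝ => z.1 - (r - p) / 2 * z.2 :=
    continuous_fst.sub (continuous_const.mul continuous_snd)
  have h3 : Continuous fun z : ℝ × ℝ => z.1 - (s - q) / 2 * z.2 :=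
    continuous_fst.sub (continuous_const.mul continuous_snd)
  exact (isOpen_lt continuous_const h1).inter ((isOpen_lt h1 continuous_const).inter
    ((isOpen_lt continuous_const h2).inter (isOpen_lt h3 continuous_const)))

lemma quadRs_subset_interior (p q r s : ℝ) : quadRs p q r s ⊆ interior (quadR p q r s) :=
  interior_maximal (fun z hz => ⟨hz.1.le, hz.2.1.le, hz.2.2.1.le, hz.2.2.2.le⟩) (quadRs_open p q r s)

lemma interior_quadR_subset (p q r s : ℝ) : interior (quadR p q r s) ⊆ quadRs p q r s := by
  intro z hz
  rw [mem_interior_iff_mem_nhds, Metric.mem_nhds_iff] at hz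
  obtain ⟨ε, hε, hball⟩ := hz
  have key : ∀ w : ℝ × ℝ, dist w z < ε → w ∈ quadR p q r s := fun w hw => hball hw
  have hd : ∀ u v : ℝ, dist ((z.1 + u, z.2 + v) : ℝ × ℝ) z = max |u| |v| := by
    intro u v
    rw [Prod.dist_eq]
    simp [Real.dist_eq]
  have hmem : ∀ u v : ℝ, |u| < ε → |v| < ε → ((z.1 + u, z.2 + v) : ℝ × ℝ) ∈ quadR p q r s := by
    intro u v hu hv
    apply key
    rw [hd]
    exact max_lt hu hv
  have hε2 : |(-(ε/2) : ℝ)| < ε := by rw [abs_neg, abs_of_pos (by linarith)]; linarith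
  have hε2' : |(ε/2 : ℝ)| < ε := by rw [abs_of_pos (by linarith)]; linarith
  have h0 : |(0:ℝ)| < ε := by simpa using hε
  refine ⟨?_, ?_, ?_, ?_⟩
  · have := (hmem 0 (-(ε/2)) h0 hε2).1
    simp at this
    linarith
  · have := (hmem 0 (ε/2) h0 hε2').2.1
    simp at this
    linarith
  · have := (hmem (-(ε/2)) 0 hε2 h0).2.2.1
    simp at this
    linarith
  · have := (hmem (ε/2) 0 hε2' h0).2.2.2
    simp at this
    linarith

end Quad

section EkGeometry

variable {g k : ℤ}

def rowSet (g : ℤ) : Set (ℤ × ℤ) := {p : ℤ × ℤ | 1 ≤ p.1 ∧ p.1 ≤ g ∧ p.2 = 1}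

lemma ekHull (g k : ℤ) (hg : 2 ≤ g) (hk1 : 1 ≤ k) (hk2 : k ≤ g + 2) :
    polyHull (EkVerts g k) = quadR 0 ((g : ℝ) + k) 0 ((g : ℝ) + 2 - k) := by
  have himg : toR '' (↑(EkVerts g k) : Set (ℤ × ℤ)) =
      ({((0:ℝ), (0:ℝ)), ((g : ℝ) + k, 0), (0, 2), ((g : ℝ) + 2 - k, 2)} : Set (ℝ × ℝ)) := by
    ext z
    simp only [EkVerts, Finset.coe_insert, Finset.coe_singleton, Set.image_insert_eq,
      Set.image_singleton, Set.mem_insert_iff, Set.mem_singleton_iff, toR]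
    push_cast
    tauto
  have hg' : (2 : ℝ) ≤ (g : ℝ) := by exact_mod_cast hg
  have hk1' : (1 : ℝ) ≤ (k : ℝ) := by exact_mod_cast hk1
  have hk2' : (k : ℝ) ≤ (g : ℝ) + 2 := by exact_mod_cast hk2
  unfold polyHull
  rw [himg, ← quadHull 0 ((g : ℝ) + k) 0 ((g : ℝ) + 2 - k) (by linarith) (by linarith)]

lemma quad_intPts (g : ℤ) (V : Finset (ℤ × ℤ)) (Pr Qr : ℝ)
    (hhull : polyHull V = quadR Pr Qr (-Pr) (2 * (g : ℝ) + 2 - Qr)) :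
    intPts V = rowSet g := by
  ext m
  simp only [intPts, Set.mem_setOf_eq, rowSet, hhull]
  constructor
  · intro hm
    have hs := interior_quadR_subset _ _ _ _ hm
    obtain ⟨h1, h2, h3, h4⟩ := hs
    simp only [toR] at h1 h2 h3 h4
    have hm2 : m.2 = 1 := by
      have b1 : (0 : ℤ) < m.2 := by exact_mod_cast h1
      have b2 : (m.2 : ℤ) < 2 := by exact_mod_cast h2
      omega
    rw [hm2] at h3 h4
    push_cast at h3 h4
    refine ⟨?_, ?_, hm2⟩
    · have : (0 : ℝ) < (m.1 : ℝ) := by nlinarith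
      have : (0 : ℤ) < m.1 := by exact_mod_cast this
      omega
    · have : (m.1 : ℝ) < (g : ℝ) + 1 := by nlinarith
      have : m.1 < g + 1 := by exact_mod_cast this
      omega
  · rintro ⟨h1, h2, h3⟩
    apply quadRs_subset_interior
    refine ⟨?_, ?_, ?_, ?_⟩ <;> simp only [toR, h3] <;> push_cast
    · norm_num
    · norm_num
    · have : (1 : ℝ) ≤ (m.1 : ℝ) := by exact_mod_cast h1
      nlinarith
    · have : (m.1 : ℝ) ≤ (g : ℝ) := by exact_mod_cast h2
      nlinarith

lemma ek_intPts (g k : ℤ) (hg : 2 ≤ g) (hk1 : 1 ≤ k) (hk2 : k ≤ g + 2) :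
    intPts (EkVerts g k) = rowSet g := by
  apply quad_intPts g (EkVerts g k) 0 ((g : ℝ) + k)
  rw [ekHull g k hg hk1 hk2]
  have h1 : (2 * (g:ℝ) + 2 - ((g:ℝ) + k)) = (g:ℝ) + 2 - k := by ring
  rw [h1]
  norm_num

end EkGeometry

section InteriorLemmas

/-- a point strictly between an interior point and a point of the set, on a horizontal line,
is interior. -/
lemma between_interior {Q : Set (ℝ × ℝ)} (hQ : Convex ℝ Q) {A b c y : ℝ}
    (ha : ((A : ℝ), y) ∈ interior Q) (hb : ((b : ℝ), y) ∈ Q)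
    (h : A < c ∧ c < b ∨ b < c ∧ c < A) : ((c : ℝ), y) ∈ interior Q := by
  have hAb : b - A ≠ 0 := by rcases h with ⟨h1, h2⟩ | ⟨h1, h2⟩ <;> intro hc <;> nlinarith
  set t : ℝ := (c - A) / (b - A) with htd
  have ht0 : 0 < t ∨ 0 ≤ t := by
    rcases h with ⟨h1, h2⟩ | ⟨h1, h2⟩
    · left; apply div_pos <;> linarith
    · left; exact div_pos_of_neg_of_neg (by linarith) (by linarith)
  have ht0' : 0 ≤ t := by rcases ht0 with h' | h'; exact h'.le; exact h'
  have ht1 : t < 1 := by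
    rcases h with ⟨h1, h2⟩ | ⟨h1, h2⟩
    · rw [htd, div_lt_one (by linarith)]; linarith
    · rw [htd, div_lt_one_of_neg (by linarith)]; linarith
  have htb : t * (b - A) = c - A := div_mul_cancel₀ _ hAb
  have key := hQ.combo_interior_self_mem_interior ha hb (by linarith : (0:ℝ) < 1 - t) ht0'
    (by ring : (1 - t) + t = 1)
  have : (1 - t) • ((A : ℝ), y) + t • ((b : ℝ), y) = ((c : ℝ), y) := by
    have hc : (1 - t) • ((A : ℝ), y) + t • ((b : ℝ), y)
        = ((1 - t) * A + t * b, (1 - t) * y + t * y) := rfl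
    rw [hc, Prod.ext_iff]
    exact ⟨by show (1-t)*A + t*b = c; linear_combination htb, by show (1-t)*y+t*y = y; ring⟩
  rwa [this] at key

/-- from a lattice point at height `β ≥ 3` in `Q` and interior points `(1,1),(g,1)`,
produce an interior lattice point at height `2`. -/
lemma newpt {Q : Set (ℝ × ℝ)} (hQ : Convex ℝ Q) {g : ℤ} (hg : 2 ≤ g)
    (h1 : ((1 : ℝ), 1) ∈ interior Q) (hgpt : (((g : ℤ) : ℝ), 1) ∈ interior Q)
    {α β : ℤ} (hβ : 3 ≤ β) (hw : (((α : ℤ) : ℝ), ((β : ℤ) : ℝ)) ∈ Q) :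
    ∃ m : ℤ, (((m : ℤ) : ℝ), (2 : ℝ)) ∈ interior Q := by
  have hβR : (3 : ℝ) ≤ (β : ℝ) := by exact_mod_cast hβ
  have hgR : (2 : ℝ) ≤ (g : ℝ) := by exact_mod_cast hg
  set t : ℝ := 1 / ((β : ℝ) - 1) with htd
  have hden0 : (0:ℝ) < (β : ℝ) - 1 := by linarith
  have htpos : 0 < t := by rw [htd]; positivity
  have ht1 : t < 1 := by rw [htd, div_lt_one (by linarith)]; linarith
  have htβ : t * ((β : ℝ) - 1) = 1 := by
    rw [htd, one_div, inv_mul_cancel₀ (by linarith : (β:ℝ) - 1 ≠ 0)]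
  -- q i = (1-t)•(i,1) + t•(α,β), at height 2
  have hq : ∀ i : ℝ, ((i : ℝ), (1:ℝ)) ∈ interior Q →
      ((1 - t) * i + t * α, (2 : ℝ)) ∈ interior Q := by
    intro i hi
    have key := hQ.combo_interior_self_mem_interior hi hw (by linarith : (0:ℝ) < 1 - t)
      htpos.le (by ring)
    have : (1 - t) • ((i : ℝ), (1:ℝ)) + t • (((α : ℤ) : ℝ), ((β : ℤ) : ℝ))
        = ((1 - t) * i + t * α, (2 : ℝ)) := by
      have hc : (1 - t) • ((i : ℝ), (1:ℝ)) + t • (((α : ℤ) : ℝ), ((β : ℤ) : ℝ))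
          = ((1 - t) * i + t * α, (1 - t) * 1 + t * β) := rfl
      rw [hc, Prod.ext_iff]
      refine ⟨rfl, ?_⟩
      show (1 - t) * 1 + t * (β : ℝ) = 2
      linear_combination htβ
    rwa [this] at key
  have hq1 := hq 1 h1
  have hqg := hq (g : ℝ) hgpt
  -- choose the integer m
  set m : ℤ := ⌈((α : ℝ) + β - 2) / ((β : ℝ) - 1)⌉ with hmd
  have hden : (0 : ℝ) < (β : ℝ) - 1 := by linarith
  have hlow : ((α : ℝ) + β - 2) / ((β : ℝ) - 1) ≤ (m : ℝ) := Int.le_ceil _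
  have hup : (m : ℝ) < ((α : ℝ) + β - 2) / ((β : ℝ) - 1) + 1 := Int.ceil_lt_add_one _
  have hx1 : (1 - t) * 1 + t * α = ((α : ℝ) + β - 2) / ((β : ℝ) - 1) := by
    rw [htd]; field_simp; ring
  have hxg : (1 - t) * g + t * α = ((g : ℝ) * ((β : ℝ) - 2) + α) / ((β : ℝ) - 1) := by
    rw [htd]; field_simp; ring
  have hmlow : (1 - t) * 1 + t * α ≤ (m : ℝ) := by rw [hx1]; exact hlow
  have hmup : (m : ℝ) ≤ (1 - t) * g + t * α := by
    rw [hxg, le_div_iff₀ hden]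
    have h2 : (m : ℝ) * ((β : ℝ) - 1) < (α : ℝ) + 2 * β - 3 := by
      have := mul_lt_mul_of_pos_right hup hden
      calc (m : ℝ) * ((β : ℝ) - 1) < (((α : ℝ) + β - 2) / ((β : ℝ) - 1) + 1) * ((β : ℝ) - 1) := this
        _ = (α : ℝ) + 2 * β - 3 := by field_simp; ring
    -- integrality: m * (β - 1) ≤ α + 2β - 4
    have h3 : m * (β - 1) ≤ α + 2 * β - 4 := by
      have : (m * (β - 1) : ℝ) < ((α + 2 * β - 3 : ℤ) : ℝ) := by push_cast; linarith
      have : m * (β - 1) < α + 2 * β - 3 := by exact_mod_cast this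
      omega
    have h3R : (m : ℝ) * ((β : ℝ) - 1) ≤ (α : ℝ) + 2 * β - 4 := by exact_mod_cast h3
    nlinarith
  refine ⟨m, ?_⟩
  -- (m,2) lies on the segment between q1 and qg, both interior
  have hconv := hQ.interior
  rcases eq_or_lt_of_le hmlow with heq | hlt
  · rw [heq] at hq1; exact hq1
  rcases eq_or_lt_of_le hmup with heq | hlt2
  · rw [← heq] at hqg; exact hqg
  exact between_interior hQ hq1 (interior_subset hqg) (Or.inl ⟨hlt, hlt2⟩)

/-- all of the hull satisfies a linear inequality satisfied by the generators. -/
lemma hull_le_linear (α β γ : ℝ) (V : Finset (ℤ × ℤ))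
    (h : ∀ w ∈ V, α * (w.1 : ℝ) + β * (w.2 : ℝ) ≤ γ) :
    ∀ z ∈ polyHull V, α * z.1 + β * z.2 ≤ γ := by
  have hconv : Convex ℝ {z : ℝ × ℝ | α * z.1 + β * z.2 ≤ γ} := by
    rintro x hx y hy u v hu hv huv
    simp only [Set.mem_setOf_eq] at hx hy ⊢
    have h1 : (u • x + v • y).1 = u * x.1 + v * y.1 := rfl
    have h2 : (u • x + v • y).2 = u * x.2 + v * y.2 := rfl
    rw [h1, h2]
    calc α * (u * x.1 + v * y.1) + β * (u * x.2 + v * y.2)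
        = u * (α * x.1 + β * x.2) + v * (α * y.1 + β * y.2) := by ring
      _ ≤ u * γ + v * γ := add_le_add (mul_le_mul_of_nonneg_left hx hu)
          (mul_le_mul_of_nonneg_left hy hv)
      _ = γ := by linear_combination γ * huv
  intro z hz
  refine convexHull_min ?_ hconv hz
  rintro _ ⟨w, hw, rfl⟩
  exact h w hw

end InteriorLemmas

section Flip

def flipA : (ℝ × ℝ) →ᵃ[ℝ] (ℝ × ℝ) := umAff 1 0 0 (-1) 0 2

lemma flip_pair : UMPair 1 0 0 (-1) 0 2 1 0 0 (-1) 0 2 := by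
  refine ⟨by norm_num, by norm_num, ?_, ?_, ?_, ?_⟩ <;> intro p <;>
    simp [unimodMap, umAff_apply, Prod.ext_iff] <;> ring

lemma flipA_apply (z : ℝ × ℝ) : flipA z = (z.1, 2 - z.2) := by
  simp [flipA, umAff_apply, Prod.ext_iff]; ring

lemma newpt_down {Q : Set (ℝ × ℝ)} (hQ : Convex ℝ Q) {g : ℤ} (hg : 2 ≤ g)
    (h1 : ((1 : ℝ), 1) ∈ interior Q) (hgpt : (((g : ℤ) : ℝ), 1) ∈ interior Q)
    {α β : ℤ} (hβ : β ≤ -1) (hw : (((α : ℤ) : ℝ), ((β : ℤ) : ℝ)) ∈ Q) :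
    ∃ m : ℤ, (((m : ℤ) : ℝ), (0 : ℝ)) ∈ interior Q := by
  set Q' : Set (ℝ × ℝ) := flipA '' Q with hQ'd
  have hQ'conv : Convex ℝ Q' := hQ.affine_image flipA
  have hintQ' : interior Q' = flipA '' interior Q := flip_pair.image_interior Q
  have h1' : ((1 : ℝ), 1) ∈ interior Q' := by
    rw [hintQ']
    exact ⟨((1:ℝ), 1), h1, by rw [flipA_apply]; norm_num⟩
  have hg' : (((g : ℤ) : ℝ), 1) ∈ interior Q' := by
    rw [hintQ']
    exact ⟨(((g:ℤ):ℝ), 1), hgpt, by rw [flipA_apply]; norm_num⟩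
  have hw' : (((α : ℤ) : ℝ), (((2 - β : ℤ)) : ℝ)) ∈ Q' := by
    refine ⟨(((α:ℤ):ℝ), ((β:ℤ):ℝ)), hw, ?_⟩
    rw [flipA_apply]
    push_cast
    norm_num
  obtain ⟨m, hm⟩ := newpt hQ'conv hg h1' hg' (by omega : 3 ≤ 2 - β) hw'
  rw [hintQ'] at hm
  obtain ⟨z, hz, hzm⟩ := hm
  have : z = (((m : ℤ) : ℝ), (0 : ℝ)) := by
    rw [flipA_apply] at hzm
    rw [Prod.ext_iff] at hzm ⊢
    obtain ⟨e1, e2⟩ := hzm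
    exact ⟨e1, by simp at e2 ⊢; linarith⟩
  refine ⟨m, ?_⟩
  rw [← this]
  exact hz

end Flip

section EkMaximal

lemma midpt_mem {Q : Set (ℝ × ℝ)} (hQ : Convex ℝ Q) {u v : ℝ × ℝ} (hu : u ∈ Q) (hv : v ∈ Q) :
    (((u.1 + v.1) / 2, (u.2 + v.2) / 2) : ℝ × ℝ) ∈ Q := by
  have h := hQ hu hv (by norm_num : (0:ℝ) ≤ 1/2) (by norm_num : (0:ℝ) ≤ 1/2) (by norm_num)
  have : (1/2 : ℝ) • u + (1/2 : ℝ) • v = ((u.1 + v.1) / 2, (u.2 + v.2) / 2) := by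
    rw [Prod.ext_iff]
    constructor
    · show (1/2) * u.1 + (1/2) * v.1 = (u.1 + v.1) / 2; ring
    · show (1/2) * u.2 + (1/2) * v.2 = (u.2 + v.2) / 2; ring
  rwa [this] at h

lemma ek_vertex_mem (g k : ℤ) (v : ℤ × ℤ) (hv : v ∈ EkVerts g k) :
    toR v ∈ polyHull (EkVerts g k) :=
  subset_convexHull _ _ (Set.mem_image_of_mem _ hv)

lemma ek_maximal (g k : ℤ) (hg : 2 ≤ g) (hk1 : 1 ≤ k) (hk2 : k ≤ g + 2)
    (W : Finset (ℤ × ℤ)) (hsub : polyHull (EkVerts g k) ⊆ polyHull W)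
    (hint : intPts W = rowSet g) : polyHull W ⊆ polyHull (EkVerts g k) := by
  by_contra hcon
  have hex : ∃ w ∈ W, toR w ∉ polyHull (EkVerts g k) := by
    by_contra hall
    push_neg at hall
    apply hcon
    apply convexHull_min _ (convex_convexHull ℝ _)
    rintro _ ⟨w, hw, rfl⟩
    exact hall w hw
  obtain ⟨w, hwW, hwout⟩ := hex
  set Q := polyHull W with hQd
  have hQ : Convex ℝ Q := convex_convexHull _ _
  have hwQ : toR w ∈ Q := subset_convexHull _ _ (Set.mem_image_of_mem _ hwW)
  have hrow : ∀ m : ℤ × ℤ, toR m ∈ interior Q → 1 ≤ m.1 ∧ m.1 ≤ g ∧ m.2 = 1 := by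
    intro m hm
    have : m ∈ intPts W := hm
    rw [hint] at this
    exact this
  have h11 : ((1:ℝ), (1:ℝ)) ∈ interior Q := by
    have : ((1,1) : ℤ × ℤ) ∈ intPts W := by rw [hint]; exact ⟨le_refl 1, by omega, rfl⟩
    have h2 : toR ((1,1) : ℤ × ℤ) ∈ interior Q := this
    simpa [toR] using h2
  have hg1 : (((g:ℤ):ℝ), (1:ℝ)) ∈ interior Q := by
    have : ((g,1) : ℤ × ℤ) ∈ intPts W := by rw [hint]; exact ⟨by omega, le_refl g, rfl⟩
    have h2 : toR ((g,1) : ℤ × ℤ) ∈ interior Q := this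
    simpa [toR] using h2
  have hgR : (2:ℝ) ≤ (g:ℝ) := by exact_mod_cast hg
  have hkR : (1:ℝ) ≤ (k:ℝ) := by exact_mod_cast hk1
  have hk2R : (k:ℝ) ≤ (g:ℝ) + 2 := by exact_mod_cast hk2
  set α := w.1 with hαd
  set β := w.2 with hβd
  have hwtoR : toR w = (((α:ℤ):ℝ), ((β:ℤ):ℝ)) := rfl
  rcases le_or_gt 3 β with hβ3 | hβlt
  · obtain ⟨m, hm⟩ := newpt hQ hg h11 hg1 hβ3 (hwtoR ▸ hwQ)
    have hm' : toR ((m, 2) : ℤ × ℤ) ∈ interior Q := by simpa [toR] using hm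
    have := (hrow (m, 2) hm').2.2
    norm_num at this
  rcases le_or_gt β (-1) with hβn | hβpos
  · obtain ⟨m, hm⟩ := newpt_down hQ hg h11 hg1 hβn (hwtoR ▸ hwQ)
    have hm' : toR ((m, 0) : ℤ × ℤ) ∈ interior Q := by simpa [toR] using hm
    have := (hrow (m, 0) hm').2.2
    norm_num at this
  -- now β ∈ {0, 1, 2}
  have hβcases : β = 0 ∨ β = 1 ∨ β = 2 := by omega
  rw [ekHull g k hg hk1 hk2] at hwout
  have hviol : ¬ ((0:ℝ) ≤ (β:ℝ) ∧ (β:ℝ) ≤ 2 ∧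
      (0:ℝ) ≤ (α:ℝ) - ((0:ℝ) - 0) / 2 * (β:ℝ) ∧
      (α:ℝ) - (((g:ℝ) + 2 - k) - ((g:ℝ) + k)) / 2 * (β:ℝ) ≤ (g:ℝ) + k) := hwout
  push_neg at hviol
  have hβR0 : (0:ℝ) ≤ (β:ℝ) := by exact_mod_cast (by omega : (0:ℤ) ≤ β)
  have hβR2 : (β:ℝ) ≤ 2 := by exact_mod_cast (by omega : β ≤ 2)
  have hviol2 := hviol hβR0 hβR2
  -- so either α < 0 or α + (k-1)β > g + k
  have key : (α:ℝ) < 0 ∨ (g:ℝ) + k < (α:ℝ) + ((k:ℝ) - 1) * (β:ℝ) := by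
    by_cases hα : (0:ℝ) ≤ (α:ℝ)
    · right
      have := hviol2 (by rw [show ((0:ℝ) - 0)/2 = 0 by norm_num]; linarith)
      nlinarith [this]
    · left; linarith
  have hαint : α ≤ -1 ∨ g + k < α + (k - 1) * β := by
    rcases key with h | h
    · left
      have : α < 0 := by exact_mod_cast h
      omega
    · right
      have : ((g + k : ℤ) : ℝ) < ((α + (k-1)*β : ℤ) : ℝ) := by push_cast; linarith
      exact_mod_cast this
  -- memberships of E_k vertices in Q
  have m00 : ((0:ℝ), (0:ℝ)) ∈ Q := by
    have := hsub (ek_vertex_mem g k (0,0) (by simp [EkVerts]))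
    simpa [toR] using this
  have m02 : ((0:ℝ), (2:ℝ)) ∈ Q := by
    have := hsub (ek_vertex_mem g k (0,2) (by simp [EkVerts]))
    simpa [toR] using this
  have mq0 : (((g:ℝ) + k), (0:ℝ)) ∈ Q := by
    have := hsub (ek_vertex_mem g k (g+k,0) (by simp [EkVerts]))
    simpa [toR] using this
  have ms2 : (((g:ℝ) + 2 - k), (2:ℝ)) ∈ Q := by
    have := hsub (ek_vertex_mem g k (g+2-k,2) (by simp [EkVerts]))
    simpa [toR] using this
  have absurd0 : ¬ (((0:ℤ),(1:ℤ)) : ℤ × ℤ).1 ≥ 1 := by norm_num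
  -- helper converting interior statements
  have int01 : ((0:ℝ), (1:ℝ)) ∈ interior Q → False := by
    intro h
    have h2 : toR ((0,1) : ℤ × ℤ) ∈ interior Q := by simpa [toR] using h
    have := (hrow (0,1) h2).1
    norm_num at this
  have intg1 : (((g:ℝ) + 1), (1:ℝ)) ∈ interior Q → False := by
    intro h
    have h2 : toR ((g+1,1) : ℤ × ℤ) ∈ interior Q := by
      simpa [toR] using (by push_cast; exact h : (((g+1 : ℤ):ℝ), ((1:ℤ):ℝ)) ∈ interior Q)
    have := (hrow (g+1,1) h2).2.1
    omega
  rcases hβcases with hβv | hβv | hβv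
  · -- β = 0
    have hwQ0 : (((α:ℤ):ℝ), (0:ℝ)) ∈ Q := by
      rw [hwtoR] at hwQ; rw [hβv] at hwQ; simpa using hwQ
    rcases hαint with hα | hα
    · -- α ≤ -1 : midpoint with (0,2)
      have hmid := midpt_mem hQ hwQ0 m02
      simp only at hmid
      have hmid' : (((α:ℝ)/2), (1:ℝ)) ∈ Q := by
        have : (((α:ℝ) + 0)/2, ((0:ℝ) + 2)/2) = (((α:ℝ)/2), (1:ℝ)) := by norm_num
        rwa [this] at hmid
      have hαR : (α:ℝ) ≤ -1 := by exact_mod_cast hα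
      exact int01 (between_interior hQ h11 hmid' (Or.inr ⟨by linarith, by norm_num⟩))
    · -- α ≥ g + k + 1 : midpoint with (g+2-k, 2)
      rw [hβv] at hα
      have hα' : g + k + 1 ≤ α := by omega
      have hαR : (g:ℝ) + k + 1 ≤ (α:ℝ) := by exact_mod_cast hα'
      have hmid := midpt_mem hQ hwQ0 ms2
      simp only at hmid
      have hmid' : ((((α:ℝ) + ((g:ℝ) + 2 - k))/2), (1:ℝ)) ∈ Q := by
        have : (((α:ℝ) + ((g:ℝ) + 2 - k))/2, ((0:ℝ) + 2)/2)
            = ((((α:ℝ) + ((g:ℝ) + 2 - k))/2), (1:ℝ)) := by norm_num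
        rwa [this] at hmid
      exact intg1 (between_interior hQ hg1 hmid' (Or.inl ⟨by linarith, by linarith⟩))
  · -- β = 1
    have hwQ1 : (((α:ℤ):ℝ), (1:ℝ)) ∈ Q := by
      rw [hwtoR] at hwQ; rw [hβv] at hwQ; simpa using hwQ
    rcases hαint with hα | hα
    · have hαR : (α:ℝ) ≤ -1 := by exact_mod_cast hα
      exact int01 (between_interior hQ h11 hwQ1 (Or.inr ⟨by linarith, by norm_num⟩))
    · rw [hβv] at hα
      have hα' : g + 2 ≤ α := by omega
      have hαR : (g:ℝ) + 2 ≤ (α:ℝ) := by exact_mod_cast hα'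
      exact intg1 (between_interior hQ hg1 hwQ1 (Or.inl ⟨by linarith, by linarith⟩))
  · -- β = 2
    have hwQ2 : (((α:ℤ):ℝ), (2:ℝ)) ∈ Q := by
      rw [hwtoR] at hwQ; rw [hβv] at hwQ; simpa using hwQ
    rcases hαint with hα | hα
    · have hαR : (α:ℝ) ≤ -1 := by exact_mod_cast hα
      have hmid := midpt_mem hQ hwQ2 m00
      simp only at hmid
      have hmid' : (((α:ℝ)/2), (1:ℝ)) ∈ Q := by
        have : (((α:ℝ) + 0)/2, ((2:ℝ) + 0)/2) = (((α:ℝ)/2), (1:ℝ)) := by norm_num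
        rwa [this] at hmid
      exact int01 (between_interior hQ h11 hmid' (Or.inr ⟨by linarith, by norm_num⟩))
    · rw [hβv] at hα
      have hα' : g + 3 - k ≤ α := by omega
      have hαR : (g:ℝ) + 3 - k ≤ (α:ℝ) := by
        have : ((g + 3 - k : ℤ) : ℝ) ≤ (α:ℝ) := by exact_mod_cast hα'
        push_cast at this; linarith
      have hmid := midpt_mem hQ hwQ2 mq0
      simp only at hmid
      have hmid' : ((((α:ℝ) + ((g:ℝ) + k))/2), (1:ℝ)) ∈ Q := by
        have : (((α:ℝ) + ((g:ℝ) + k))/2, ((2:ℝ) + 0)/2)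
            = ((((α:ℝ) + ((g:ℝ) + k))/2), (1:ℝ)) := by norm_num
        rwa [this] at hmid
      exact intg1 (between_interior hQ hg1 hmid' (Or.inl ⟨by linarith, by linarith⟩))

end EkMaximal

section LatEquivHull

variable {a b c d e f a' b' c' d' e' f' : ℤ} {V W : Finset (ℤ × ℤ)}

lemma UMPair.symm (h : UMPair a b c d e f a' b' c' d' e' f') :
    UMPair a' b' c' d' e' f' a b c d e f :=
  ⟨h.det', h.det, h.ri, h.li, h.riR, h.liR⟩

lemma hull_latPts (V : Finset (ℤ × ℤ)) :
    convexHull ℝ (toR '' latPts V) = polyHull V := by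
  apply le_antisymm
  · apply convexHull_min _ (convex_convexHull ℝ _)
    rintro _ ⟨p, hp, rfl⟩
    exact hp
  · exact convexHull_mono (Set.image_mono fun p hp =>
      subset_convexHull _ _ (Set.mem_image_of_mem _ hp))

lemma latEquiv_of_hull (hdet : a * d - b * c = 1 ∨ a * d - b * c = -1)
    (hh : umAff a b c d e f '' polyHull V = polyHull W) : LatEquiv V W := by
  obtain ⟨a', b', c', d', e', f', hU⟩ := exists_umpair hdet
  refine ⟨a, b, c, d, e, f, hdet, ?_⟩
  ext m
  constructor
  · rintro ⟨p, hp, rfl⟩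
    show toR (unimodMap a b c d e f p) ∈ polyHull W
    rw [← hh]
    exact ⟨toR p, hp, umAff_toR a b c d e f p⟩
  · intro hm
    refine ⟨unimodMap a' b' c' d' e' f' m, ?_, hU.ri m⟩
    show toR (unimodMap a' b' c' d' e' f' m) ∈ polyHull V
    have hm' : toR m ∈ umAff a b c d e f '' polyHull V := by rw [hh]; exact hm
    obtain ⟨z, hz, hzm⟩ := hm'
    have : z = toR (unimodMap a' b' c' d' e' f' m) := by
      have := congrArg (umAff a' b' c' d' e' f') hzm
      rw [hU.liR z] at this
      rw [this, umAff_toR]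
    rwa [← this]

lemma hull_of_latEquiv (h : LatEquiv V W) :
    ∃ a b c d e f : ℤ, (a * d - b * c = 1 ∨ a * d - b * c = -1) ∧
      umAff a b c d e f '' polyHull V = polyHull W ∧
      unimodMap a b c d e f '' latPts V = latPts W := by
  obtain ⟨a, b, c, d, e, f, hdet, him⟩ := h
  refine ⟨a, b, c, d, e, f, hdet, ?_, him⟩
  calc umAff a b c d e f '' polyHull V
      = umAff a b c d e f '' convexHull ℝ (toR '' latPts V) := by rw [hull_latPts]
    _ = convexHull ℝ (umAff a b c d e f '' (toR '' latPts V)) :=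
        AffineMap.image_convexHull _ _
    _ = convexHull ℝ (toR '' (unimodMap a b c d e f '' latPts V)) := by
        rw [toR_image_image _ (umAff_toR a b c d e f)]
    _ = convexHull ℝ (toR '' latPts W) := by rw [him]
    _ = polyHull W := hull_latPts W

lemma UMPair.intPts_transfer (hU : UMPair a b c d e f a' b' c' d' e' f')
    (V W : Finset (ℤ × ℤ)) (hh : umAff a b c d e f '' polyHull V = polyHull W) :
    intPts W = unimodMap a b c d e f '' intPts V := by
  ext m
  simp only [intPts, Set.mem_setOf_eq, Set.mem_image]
  rw [← hh, hU.image_interior]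
  constructor
  · rintro ⟨z, hz, hzm⟩
    obtain ⟨p, hp⟩ : ∃ p : ℤ × ℤ, z = toR p := by
      refine ⟨unimodMap a' b' c' d' e' f' m, ?_⟩
      have := congrArg (umAff a' b' c' d' e' f') hzm
      rw [hU.liR z] at this
      rw [this, umAff_toR]
    refine ⟨p, by rwa [hp] at hz, ?_⟩
    have : umAff a b c d e f z = toR (unimodMap a b c d e f p) := by rw [hp, umAff_toR]
    rw [hzm] at this
    exact toR_inj this.symm
  · rintro ⟨p, hp, rfl⟩
    exact ⟨toR p, hp, umAff_toR a b c d e f p⟩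

end LatEquivHull

section RowSetFacts

lemma rowSet_eq_image (g : ℤ) : rowSet g = (fun x : ℤ => ((x, 1) : ℤ × ℤ)) '' Set.Icc 1 g := by
  ext p
  simp only [rowSet, Set.mem_setOf_eq, Set.mem_image, Set.mem_Icc]
  constructor
  · rintro ⟨h1, h2, h3⟩
    exact ⟨p.1, ⟨h1, h2⟩, by rw [← h3]⟩
  · rintro ⟨x, ⟨h1, h2⟩, rfl⟩
    exact ⟨h1, h2, rfl⟩

lemma rowSet_inj : Function.Injective (fun x : ℤ => ((x, 1) : ℤ × ℤ)) := by
  intro x y h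
  simpa [Prod.ext_iff] using h

lemma rowSet_ncard (g : ℤ) : (rowSet g).ncard = g.toNat := by
  rw [rowSet_eq_image, Set.ncard_image_of_injective _ rowSet_inj, ← Finset.coe_Icc,
    Set.ncard_coe_finset, Int.card_Icc]
  simp

lemma rowSet_finite (g : ℤ) : (rowSet g).Finite := by
  rw [rowSet_eq_image]
  exact (Set.finite_Icc _ _).image _

lemma rowSet_collinear (g : ℤ) (hg : 1 ≤ g) : Collinear ℝ (toR '' rowSet g) := by
  have hmem : toR ((1, 1) : ℤ × ℤ) ∈ toR '' rowSet g :=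
    Set.mem_image_of_mem _ ⟨le_refl 1, hg, rfl⟩
  rw [collinear_iff_of_mem hmem]
  refine ⟨((1:ℝ), (0:ℝ)), ?_⟩
  rintro _ ⟨p, ⟨h1, h2, h3⟩, rfl⟩
  refine ⟨(p.1 : ℝ) - 1, ?_⟩
  show toR p = ((p.1 : ℝ) - 1) • ((1:ℝ), (0:ℝ)) + toR ((1,1) : ℤ × ℤ)
  rw [Prod.ext_iff]
  constructor
  · show ((p.1 : ℤ) : ℝ) = ((p).1 - 1 : ℝ) * 1 + ((1 : ℤ) : ℝ)
    push_cast; ring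
  · show ((p.2 : ℤ) : ℝ) = ((p).1 - 1 : ℝ) * 0 + ((1 : ℤ) : ℝ)
    rw [h3]; push_cast; ring

lemma collinear_image_affine (F : (ℝ × ℝ) →ᵃ[ℝ] (ℝ × ℝ)) {s : Set (ℝ × ℝ)}
    (h : Collinear ℝ s) : Collinear ℝ (F '' s) := by
  rcases s.eq_empty_or_nonempty with rfl | ⟨p₀, hp₀⟩
  · simp [collinear_empty]
  have hmem : F p₀ ∈ F '' s := Set.mem_image_of_mem _ hp₀
  rw [collinear_iff_of_mem hp₀] at h
  obtain ⟨v, hv⟩ := h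
  rw [collinear_iff_of_mem hmem]
  refine ⟨F.linear v, ?_⟩
  rintro _ ⟨p, hp, rfl⟩
  obtain ⟨r, hr⟩ := hv p hp
  refine ⟨r, ?_⟩
  rw [hr, AffineMap.map_vadd, LinearMap.map_smul]

end RowSetFacts

section PolygonCriterion

lemma range_fin3 {α : Type*} (x y z : α) : Set.range ![x, y, z] = {x, y, z} := by
  ext w
  constructor
  · rintro ⟨i, rfl⟩
    fin_cases i <;> simp
  · rintro (rfl | rfl | rfl)
    exacts [⟨0, rfl⟩, ⟨1, rfl⟩, ⟨2, rfl⟩]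

lemma collinear_of_triples {s : Set (ℝ × ℝ)}
    (h : ∀ p ∈ s, ∀ q ∈ s, ∀ r ∈ s, Collinear ℝ ({p, q, r} : Set (ℝ × ℝ))) :
    Collinear ℝ s := by
  rcases s.eq_empty_or_nonempty with rfl | ⟨p₀, hp₀⟩
  · exact collinear_empty ℝ _
  by_cases hsub : ∀ q ∈ s, q = p₀
  · have hss : s ⊆ {p₀} := fun x hx => by rw [hsub x hx]; rfl
    exact Collinear.subset hss (collinear_singleton ℝ p₀)
  push_neg at hsub
  obtain ⟨q₀, hq₀, hq₀ne⟩ := hsub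
  rw [collinear_iff_of_mem hp₀]
  refine ⟨q₀ - p₀, ?_⟩
  intro p hp
  have hc := h p₀ hp₀ q₀ hq₀ p hp
  have hmem : p₀ ∈ ({p₀, q₀, p} : Set (ℝ × ℝ)) := by simp
  rw [collinear_iff_of_mem hmem] at hc
  obtain ⟨v, hv⟩ := hc
  obtain ⟨r₁, hr₁⟩ := hv q₀ (by simp)
  obtain ⟨r₂, hr₂⟩ := hv p (by simp)
  have hr₁ne : r₁ ≠ 0 := by
    intro hc0
    rw [hc0, zero_smul] at hr₁
    simp at hr₁
    exact hq₀ne hr₁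
  refine ⟨r₂ / r₁, ?_⟩
  have hq₀v : q₀ - p₀ = r₁ • v := by
    have : q₀ = r₁ • v + p₀ := hr₁
    rw [this]; abel
  rw [hr₂, hq₀v, smul_smul]
  rw [div_mul_cancel₀ _ hr₁ne]

lemma lineset_convex (p v : ℝ × ℝ) : Convex ℝ {z : ℝ × ℝ | ∃ t : ℝ, z = t • v + p} := by
  rintro x ⟨tx, rfl⟩ y ⟨ty, rfl⟩ u w hu hw huw
  refine ⟨u * tx + w * ty, ?_⟩
  rw [Prod.ext_iff]
  constructor
  · show u * (tx * v.1 + p.1) + w * (ty * v.1 + p.1) = (u * tx + w * ty) * v.1 + p.1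
    linear_combination p.1 * huw
  · show u * (tx * v.2 + p.2) + w * (ty * v.2 + p.2) = (u * tx + w * ty) * v.2 + p.2
    linear_combination p.2 * huw

lemma lineset_interior_empty (p v : ℝ × ℝ) :
    interior {z : ℝ × ℝ | ∃ t : ℝ, z = t • v + p} = ∅ := by
  by_contra hne
  obtain ⟨z, hz⟩ := Set.nonempty_iff_ne_empty.2 hne
  rw [mem_interior_iff_mem_nhds, Metric.mem_nhds_iff] at hz
  obtain ⟨ε, hε, hball⟩ := hz
  have hzmem : z ∈ {z : ℝ × ℝ | ∃ t : ℝ, z = t • v + p} :=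
    hball (Metric.mem_ball_self hε)
  obtain ⟨t₀, ht₀⟩ := hzmem
  rcases eq_or_ne v 0 with hv0 | hvne
  · -- line is a point
    have h1 : (z.1 + ε/2, z.2) ∈ Metric.ball z ε := by
      rw [Metric.mem_ball, Prod.dist_eq]
      apply max_lt
      · show dist (z.1 + ε/2) z.1 < ε
        rw [Real.dist_eq, show z.1 + ε/2 - z.1 = ε/2 by ring, abs_of_pos (by linarith)]
        linarith
      · show dist z.2 z.2 < ε
        rw [dist_self]
        exact hε
    obtain ⟨t₁, ht₁⟩ := hball h1
    rw [hv0] at ht₀ ht₁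
    simp only [smul_zero, zero_add] at ht₀ ht₁
    have h2 := congrArg Prod.fst ht₁
    have h3 := congrArg Prod.fst ht₀
    simp only at h2 h3
    rw [← h3] at h2
    simp at h2
    linarith
  · set w : ℝ × ℝ := (-v.2, v.1) with hwd
    have hsum : 0 < |v.1| + |v.2| := by
      rcases lt_or_ge 0 (|v.1| + |v.2|) with hgt | hle
      · exact hgt
      · exfalso
        have h1 := abs_nonneg v.1
        have h2 := abs_nonneg v.2
        apply hvne
        rw [Prod.ext_iff]
        constructor
        · simpa using abs_eq_zero.1 (le_antisymm (by linarith) (abs_nonneg _))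
        · simpa using abs_eq_zero.1 (le_antisymm (by linarith) (abs_nonneg _))
    obtain ⟨δ, hδpos, hb2, hb1⟩ : ∃ δ : ℝ, 0 < δ ∧ δ * |v.2| < ε ∧ δ * |v.1| < ε := by
      refine ⟨ε / (2 * (|v.1| + |v.2| + 1)), by positivity, ?_, ?_⟩
      · rw [div_mul_eq_mul_div, div_lt_iff₀ (by positivity)]
        nlinarith [abs_nonneg v.1, abs_nonneg v.2]
      · rw [div_mul_eq_mul_div, div_lt_iff₀ (by positivity)]
        nlinarith [abs_nonneg v.1, abs_nonneg v.2]
    have hz' : (z.1 + δ * (-v.2), z.2 + δ * v.1) ∈ Metric.ball z ε := by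
      rw [Metric.mem_ball, Prod.dist_eq]
      apply max_lt
      · show dist (z.1 + δ * (-v.2)) z.1 < ε
        rw [Real.dist_eq, show z.1 + δ * (-v.2) - z.1 = δ * (-v.2) by ring, abs_mul, abs_neg,
          abs_of_pos hδpos]
        exact hb2
      · show dist (z.2 + δ * v.1) z.2 < ε
        rw [Real.dist_eq, show z.2 + δ * v.1 - z.2 = δ * v.1 by ring, abs_mul,
          abs_of_pos hδpos]
        exact hb1
    obtain ⟨t₁, ht₁⟩ := hball hz'
    rw [Prod.ext_iff] at ht₁ ht₀
    obtain ⟨e1, e2⟩ := ht₁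
    obtain ⟨e3, e4⟩ := ht₀
    simp only [Prod.fst_add, Prod.snd_add, Prod.smul_fst, Prod.smul_snd,
      smul_eq_mul] at e1 e2 e3 e4
    have c1 : (t₁ - t₀) * v.1 = -(δ * v.2) := by linear_combination e3 - e1
    have c2 : (t₁ - t₀) * v.2 = δ * v.1 := by linear_combination e4 - e2
    have hδvv : δ * (v.1 * v.1 + v.2 * v.2) = 0 := by
      linear_combination v.2 * c1 - v.1 * c2
    have hvv : v.1 * v.1 + v.2 * v.2 = 0 := by
      rcases mul_eq_zero.1 hδvv with h | h
      · exact absurd h (ne_of_gt hδpos)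
      · exact h
    apply hvne
    rw [Prod.ext_iff]
    simp only [Prod.fst_zero, Prod.snd_zero]
    constructor
    · nlinarith [sq_nonneg v.1, sq_nonneg v.2, hvv]
    · nlinarith [sq_nonneg v.1, sq_nonneg v.2, hvv]

lemma polygon_of_interior_nonempty (V : Finset (ℤ × ℤ))
    (h : (interior (polyHull V)).Nonempty) : IsLatticePolygon V := by
  by_contra hnp
  unfold IsLatticePolygon at hnp
  push_neg at hnp
  have htrip : ∀ p ∈ toR '' (↑V : Set (ℤ × ℤ)), ∀ q ∈ toR '' (↑V : Set (ℤ × ℤ)),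
      ∀ r ∈ toR '' (↑V : Set (ℤ × ℤ)), Collinear ℝ ({p, q, r} : Set (ℝ × ℝ)) := by
    rintro _ ⟨p, hp, rfl⟩ _ ⟨q, hq, rfl⟩ _ ⟨r, hr, rfl⟩
    have := hnp p q r hp hq hr
    rw [affineIndependent_iff_not_collinear, not_not, range_fin3] at this
    exact this
  have hcol := collinear_of_triples htrip
  rcases (toR '' (↑V : Set (ℤ × ℤ))).eq_empty_or_nonempty with hemp | ⟨p₀, hp₀⟩
  · unfold polyHull at h
    rw [hemp] at h
    simp [convexHull_empty] at h
  rw [collinear_iff_of_mem hp₀] at hcol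
  obtain ⟨v, hv⟩ := hcol
  have hsub : polyHull V ⊆ {z : ℝ × ℝ | ∃ t : ℝ, z = t • v + p₀} := by
    apply convexHull_min _ (lineset_convex p₀ v)
    intro z hz
    obtain ⟨r, hr⟩ := hv z hz
    exact ⟨r, hr⟩
  have := interior_mono hsub
  rw [lineset_interior_empty] at this
  obtain ⟨z, hz⟩ := h
  exact absurd (this hz) (Set.notMem_empty z)

end PolygonCriterion

section Backward

lemma backward_dir (g k : ℤ) (hg : 2 ≤ g) (hk1 : 1 ≤ k) (hk2 : k ≤ g + 2)
    (V : Finset (ℤ × ℤ)) (hLE : LatEquiv V (EkVerts g k)) :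
    IsLatticePolygon V ∧ ((intPts V).ncard : ℤ) = g ∧ Hyperelliptic V ∧ MaximalPoly V := by
  obtain ⟨a, b, c, d, e, f, hdet, hh, hlat⟩ := hull_of_latEquiv hLE
  obtain ⟨a', b', c', d', e', f', hU⟩ := exists_umpair hdet
  have hEint : intPts (EkVerts g k) = rowSet g := ek_intPts g k hg hk1 hk2
  -- transfer of interior points
  have hIntE : intPts (EkVerts g k) = unimodMap a b c d e f '' intPts V :=
    hU.intPts_transfer V (EkVerts g k) hh
  have hinj' : Function.Injective (unimodMap a' b' c' d' e' f') :=
    Function.LeftInverse.injective (g := unimodMap a b c d e f) hU.ri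
  have hinj : Function.Injective (unimodMap a b c d e f) :=
    Function.LeftInverse.injective (g := unimodMap a' b' c' d' e' f') hU.li
  have hIntV : intPts V = unimodMap a' b' c' d' e' f' '' rowSet g := by
    rw [← hEint, hIntE, Set.image_image,
      show (fun p => unimodMap a' b' c' d' e' f' (unimodMap a b c d e f p)) = id from
        funext hU.li, Set.image_id]
  -- reversed hull relation
  have hco : (⇑(umAff a' b' c' d' e' f') ∘ ⇑(umAff a b c d e f)) = id := funext hU.liR
  have hhrev : umAff a' b' c' d' e' f' '' polyHull (EkVerts g k) = polyHull V := by
    rw [← hh, ← Set.image_comp, hco, Set.image_id]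
  -- nonempty interior
  have h11E : toR ((1,1) : ℤ × ℤ) ∈ interior (polyHull (EkVerts g k)) := by
    have : ((1,1) : ℤ × ℤ) ∈ intPts (EkVerts g k) := by
      rw [hEint]; exact ⟨le_refl 1, by omega, rfl⟩
    exact this
  have hVint_ne : (interior (polyHull V)).Nonempty := by
    rw [← hhrev, hU.symm.image_interior]
    exact ⟨_, Set.mem_image_of_mem _ h11E⟩
  have hpoly : IsLatticePolygon V := polygon_of_interior_nonempty V hVint_ne
  have hncard : (intPts V).ncard = g.toNat := by
    rw [hIntV, Set.ncard_image_of_injective _ hinj', rowSet_ncard]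
  have hncardZ : ((intPts V).ncard : ℤ) = g := by
    rw [hncard]; omega
  refine ⟨hpoly, hncardZ, ⟨?_, ?_⟩, hpoly, ?_⟩
  · -- 2 ≤ ncard
    rw [hncard]; omega
  · -- collinear
    rw [hIntV, toR_image_image _ (umAff_toR a' b' c' d' e' f')]
    exact collinear_image_affine _ (rowSet_collinear g (by omega))
  · -- maximality
    rintro ⟨W, hWpoly, hWstrict, hWint⟩
    set W₁ := W.image (unimodMap a b c d e f) with hW₁d
    have hW₁hull : polyHull W₁ = umAff a b c d e f '' polyHull W := polyHull_image W a b c d e f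
    have hsubW : polyHull (EkVerts g k) ⊆ polyHull W₁ := by
      rw [hW₁hull, ← hh]
      exact Set.image_mono hWstrict.subset
    have hW₁int : intPts W₁ = rowSet g := by
      rw [hU.intPts_image W, hWint, ← hIntE, hEint]
    have hWsub := ek_maximal g k hg hk1 hk2 W₁ hsubW hW₁int
    -- so hulls are equal, contradicting strictness
    have heq : umAff a b c d e f '' polyHull V = umAff a b c d e f '' polyHull W := by
      apply le_antisymm
      · rw [hh]; rw [hW₁hull] at hWsub hsubW; exact hsubW
      · rw [hh]; rw [hW₁hull] at hWsub; exact hWsub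
    have hVW : polyHull V = polyHull W := by
      have h2 := congrArg (Set.image (umAff a' b' c' d' e' f')) heq
      rwa [← Set.image_comp, ← Set.image_comp, hco, Set.image_id, Set.image_id] at h2
    exact hWstrict.ne hVW

end Backward

section Part2

lemma latEquiv_symm {V W : Finset (ℤ × ℤ)} (h : LatEquiv V W) : LatEquiv W V := by
  obtain ⟨a, b, c, d, e, f, hdet, him⟩ := h
  obtain ⟨a', b', c', d', e', f', hU⟩ := exists_umpair (e := e) (f := f) hdet
  refine ⟨a', b', c', d', e', f', hU.det', ?_⟩
  rw [← him, Set.image_image,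
    show (fun p => unimodMap a' b' c' d' e' f' (unimodMap a b c d e f p)) = id from
      funext hU.li, Set.image_id]

lemma ek_latPts (g k : ℤ) (hg : 2 ≤ g) (hk1 : 1 ≤ k) (hk2 : k ≤ g + 2) :
    latPts (EkVerts g k) =
      {m : ℤ × ℤ | 0 ≤ m.2 ∧ m.2 ≤ 2 ∧ 0 ≤ m.1 ∧ m.1 + (k - 1) * m.2 ≤ g + k} := by
  ext m
  show toR m ∈ polyHull (EkVerts g k) ↔ _
  rw [ekHull g k hg hk1 hk2]
  simp only [quadR, Set.mem_setOf_eq, toR]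
  constructor
  · rintro ⟨h1, h2, h3, h4⟩
    refine ⟨by exact_mod_cast h1, by exact_mod_cast h2, ?_, ?_⟩
    · have : (0:ℝ) ≤ (m.1 : ℝ) := by nlinarith
      exact_mod_cast this
    · have : ((m.1 + (k-1)*m.2 : ℤ) : ℝ) ≤ ((g + k : ℤ) : ℝ) := by push_cast; nlinarith
      exact_mod_cast this
  · rintro ⟨h1, h2, h3, h4⟩
    have h1R : (0:ℝ) ≤ (m.2 : ℝ) := by exact_mod_cast h1
    have h2R : (m.2:ℝ) ≤ 2 := by exact_mod_cast h2
    have h3R : (0:ℝ) ≤ (m.1 : ℝ) := by exact_mod_cast h3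
    have h4R : (m.1:ℝ) + ((k:ℝ)-1)*(m.2:ℝ) ≤ (g:ℝ) + k := by
      have : ((m.1 + (k-1)*m.2 : ℤ) : ℝ) ≤ ((g + k : ℤ) : ℝ) := by exact_mod_cast h4
      push_cast at this; linarith
    exact ⟨h1R, h2R, by nlinarith, by nlinarith⟩

def botRow (g k : ℤ) : Set (ℤ × ℤ) := (fun x : ℤ => ((x, 0) : ℤ × ℤ)) '' Set.Icc 0 (g + k)

lemma botRow_inj : Function.Injective (fun x : ℤ => ((x, 0) : ℤ × ℤ)) := by
  intro x y h
  simpa [Prod.ext_iff] using h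

lemma botRow_ncard (g k : ℤ) (hg : 2 ≤ g) (hk1 : 1 ≤ k) :
    ((botRow g k).ncard : ℤ) = g + k + 1 := by
  rw [botRow, Set.ncard_image_of_injective _ botRow_inj, ← Finset.coe_Icc,
    Set.ncard_coe_finset, Int.card_Icc]
  omega

lemma botRow_subset (g k : ℤ) (hg : 2 ≤ g) (hk1 : 1 ≤ k) (hk2 : k ≤ g + 2) :
    botRow g k ⊆ latPts (EkVerts g k) := by
  rw [ek_latPts g k hg hk1 hk2]
  rintro _ ⟨x, hx, rfl⟩
  rw [Set.mem_Icc] at hx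
  exact ⟨le_refl 0, by norm_num, hx.1, by simpa using hx.2⟩

lemma botRow_collinear (g k : ℤ) : Collinear ℝ (toR '' botRow g k) := by
  rcases (toR '' botRow g k).eq_empty_or_nonempty with hemp | ⟨z₀, hz₀⟩
  · rw [hemp]; exact collinear_empty ℝ _
  obtain ⟨p₀, hp₀, rfl⟩ := hz₀
  rw [collinear_iff_of_mem (Set.mem_image_of_mem _ hp₀)]
  obtain ⟨x₀, _, rfl⟩ := hp₀
  refine ⟨((1:ℝ), (0:ℝ)), ?_⟩
  rintro _ ⟨_, ⟨x, _, rfl⟩, rfl⟩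
  refine ⟨(x : ℝ) - x₀, ?_⟩
  rw [Prod.ext_iff]
  constructor
  · show ((x:ℤ):ℝ) = ((x:ℝ) - x₀) * 1 + ((x₀:ℤ):ℝ)
    push_cast; ring
  · show ((0:ℤ):ℝ) = ((x:ℝ) - x₀) * 0 + ((0:ℤ):ℝ)
    push_cast; ring

lemma ek_latPts_finite (g k : ℤ) (hg : 2 ≤ g) (hk1 : 1 ≤ k) (hk2 : k ≤ g + 2) :
    (latPts (EkVerts g k)).Finite := by
  rw [ek_latPts g k hg hk1 hk2]
  apply Set.Finite.subset ((Set.finite_Icc (0:ℤ) (g+k)).prod (Set.finite_Icc (0:ℤ) 2))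
  rintro m ⟨h1, h2, h3, h4⟩
  refine ⟨Set.mem_Icc.2 ⟨h3, ?_⟩, Set.mem_Icc.2 ⟨h1, h2⟩⟩
  nlinarith

lemma collinear_latPts_bound (g k' : ℤ) (hg : 2 ≤ g) (hk1 : 1 ≤ k') (hk2 : k' ≤ g + 2)
    (T : Set (ℤ × ℤ)) (hT : T ⊆ latPts (EkVerts g k'))
    (hcol : Collinear ℝ (toR '' T)) : (T.ncard : ℤ) ≤ g + k' + 1 := by
  have hTfin : T.Finite := (ek_latPts_finite g k' hg hk1 hk2).subset hT
  rcases T.eq_empty_or_nonempty with rfl | ⟨p₀, hp₀⟩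
  · simp; omega
  by_cases hhor : ∀ z ∈ T, z.2 = p₀.2
  · -- horizontal: subset of a row of length ≤ g+k'
    have hsub : T ⊆ (fun x : ℤ => ((x, p₀.2) : ℤ × ℤ)) '' Set.Icc 0 (g + k') := by
      intro z hz
      have hz2 := hhor z hz
      have hzL := hT hz
      rw [ek_latPts g k' hg hk1 hk2] at hzL
      obtain ⟨h1, h2, h3, h4⟩ := hzL
      refine ⟨z.1, Set.mem_Icc.2 ⟨h3, by nlinarith⟩, ?_⟩
      rw [← hz2]
    have hinj : Function.Injective (fun x : ℤ => ((x, p₀.2) : ℤ × ℤ)) := by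
      intro x y h; simpa [Prod.ext_iff] using h
    have := Set.ncard_le_ncard hsub ((Set.finite_Icc _ _).image _)
    rw [Set.ncard_image_of_injective _ hinj, ← Finset.coe_Icc, Set.ncard_coe_finset,
      Int.card_Icc] at this
    have hn : (T.ncard : ℤ) ≤ ((g + k' + 1 - 0).toNat : ℤ) := by exact_mod_cast this
    omega
  · -- non-horizontal: at most one point per height
    push_neg at hhor
    obtain ⟨z₀, hz₀T, hz₀ne⟩ := hhor
    have hmemT : toR p₀ ∈ toR '' T := Set.mem_image_of_mem _ hp₀
    rw [collinear_iff_of_mem hmemT] at hcol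
    obtain ⟨v, hv⟩ := hcol
    have hvne : v.2 ≠ 0 := by
      obtain ⟨r₀, hr₀⟩ := hv (toR z₀) (Set.mem_image_of_mem _ hz₀T)
      intro hc
      apply hz₀ne
      have := congrArg Prod.snd hr₀
      simp only [vadd_eq_add, Prod.snd_add, Prod.smul_snd, smul_eq_mul, Prod.fst_add] at this
      rw [hc, mul_zero, zero_add] at this
      have h2 : ((z₀.2 : ℤ) : ℝ) = ((p₀.2 : ℤ) : ℝ) := by
        simpa [toR] using this
      exact_mod_cast h2
    have hinjOn : Set.InjOn (fun z : ℤ × ℤ => z.2) T := by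
      intro u hu w hw huw
      obtain ⟨ru, hru⟩ := hv (toR u) (Set.mem_image_of_mem _ hu)
      obtain ⟨rw', hrw⟩ := hv (toR w) (Set.mem_image_of_mem _ hw)
      have h2u := congrArg Prod.snd hru
      have h2w := congrArg Prod.snd hrw
      simp only [vadd_eq_add, Prod.snd_add, Prod.smul_snd, smul_eq_mul] at h2u h2w
      have huw' : ((u.2 : ℤ) : ℝ) = ((w.2 : ℤ) : ℝ) := by exact_mod_cast huw
      have hru2 : (toR u).2 = ru * v.2 + (toR p₀).2 := h2u
      have hrw2 : (toR w).2 = rw' * v.2 + (toR p₀).2 := h2w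
      have : ru = rw' := by
        have e : ru * v.2 = rw' * v.2 := by
          have : (toR u).2 = (toR w).2 := huw'
          rw [hru2, hrw2] at this
          linarith
        exact mul_right_cancel₀ hvne e
      apply toR_inj
      rw [hru, hrw, this]
    have hmapsTo : ∀ z ∈ T, (fun z : ℤ × ℤ => z.2) z ∈ Set.Icc (0:ℤ) 2 := by
      intro z hz
      have hzL := hT hz
      rw [ek_latPts g k' hg hk1 hk2] at hzL
      exact Set.mem_Icc.2 ⟨hzL.1, hzL.2.1⟩
    have := Set.ncard_le_ncard_of_injOn _ hmapsTo hinjOn (Set.finite_Icc _ _)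
    rw [← Finset.coe_Icc, Set.ncard_coe_finset, Int.card_Icc] at this
    have hn : (T.ncard : ℤ) ≤ (((2:ℤ) + 1 - 0).toNat : ℤ) := by exact_mod_cast this
    omega

lemma part2_dir (g : ℤ) (hg : 2 ≤ g) (k k' : ℤ) (hk1 : 1 ≤ k) (hk2 : k ≤ g + 2)
    (hk1' : 1 ≤ k') (hk2' : k' ≤ g + 2)
    (h : LatEquiv (EkVerts g k) (EkVerts g k')) : k ≤ k' := by
  obtain ⟨a, b, c, d, e, f, hdet, him⟩ := h
  obtain ⟨a', b', c', d', e', f', hU⟩ := exists_umpair hdet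
  have hinj : Function.Injective (unimodMap a b c d e f) :=
    Function.LeftInverse.injective (g := unimodMap a' b' c' d' e' f') hU.li
  set T : Set (ℤ × ℤ) := unimodMap a b c d e f '' botRow g k with hTd
  have hTsub : T ⊆ latPts (EkVerts g k') := by
    rw [hTd, ← him]
    exact Set.image_mono (botRow_subset g k hg hk1 hk2)
  have hTcol : Collinear ℝ (toR '' T) := by
    rw [hTd, toR_image_image _ (umAff_toR a b c d e f)]
    exact collinear_image_affine _ (botRow_collinear g k)
  have hTcard : (T.ncard : ℤ) = g + k + 1 := by
    rw [hTd, Set.ncard_image_of_injective _ hinj]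
    exact botRow_ncard g k hg hk1
  have := collinear_latPts_bound g k' hg hk1' hk2' T hTsub hTcol
  omega

lemma part2 (g : ℤ) (hg : 2 ≤ g) (k k' : ℤ) (hk1 : 1 ≤ k) (hk2 : k ≤ g + 2)
    (hk1' : 1 ≤ k') (hk2' : k' ≤ g + 2)
    (h : LatEquiv (EkVerts g k) (EkVerts g k')) : k = k' :=
  le_antisymm (part2_dir g hg k k' hk1 hk2 hk1' hk2' h)
    (part2_dir g hg k' k hk1' hk2' hk1 hk2 (latEquiv_symm h))

end Part2

section ForwardInfra

variable {a b c d e f a' b' c' d' e' f' : ℤ}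

lemma umAff_comp (a1 b1 c1 d1 e1 f1 a2 b2 c2 d2 e2 f2 : ℤ) (z : ℝ × ℝ) :
    umAff (a2*a1 + b2*c1) (a2*b1 + b2*d1) (c2*a1 + d2*c1) (c2*b1 + d2*d1)
      (a2*e1 + b2*f1 + e2) (c2*e1 + d2*f1 + f2) z
    = umAff a2 b2 c2 d2 e2 f2 (umAff a1 b1 c1 d1 e1 f1 z) := by
  simp only [umAff_apply, Prod.ext_iff]
  push_cast
  constructor <;> ring

lemma unimod_comp (a1 b1 c1 d1 e1 f1 a2 b2 c2 d2 e2 f2 : ℤ) (p : ℤ × ℤ) :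
    unimodMap (a2*a1 + b2*c1) (a2*b1 + b2*d1) (c2*a1 + d2*c1) (c2*b1 + d2*d1)
      (a2*e1 + b2*f1 + e2) (c2*e1 + d2*f1 + f2) p
    = unimodMap a2 b2 c2 d2 e2 f2 (unimodMap a1 b1 c1 d1 e1 f1 p) := by
  simp only [unimodMap, Prod.ext_iff]
  constructor <;> ring

lemma det_comp_pm {a1 b1 c1 d1 a2 b2 c2 d2 : ℤ}
    (h1 : a1 * d1 - b1 * c1 = 1 ∨ a1 * d1 - b1 * c1 = -1)
    (h2 : a2 * d2 - b2 * c2 = 1 ∨ a2 * d2 - b2 * c2 = -1) :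
    (a2*a1 + b2*c1) * (c2*b1 + d2*d1) - (a2*b1 + b2*d1) * (c2*a1 + d2*c1) = 1 ∨
    (a2*a1 + b2*c1) * (c2*b1 + d2*d1) - (a2*b1 + b2*d1) * (c2*a1 + d2*c1) = -1 := by
  have key : (a2*a1 + b2*c1) * (c2*b1 + d2*d1) - (a2*b1 + b2*d1) * (c2*a1 + d2*c1)
      = (a2 * d2 - b2 * c2) * (a1 * d1 - b1 * c1) := by ring
  rcases h1 with h1 | h1 <;> rcases h2 with h2 | h2 <;> rw [key, h1, h2] <;> norm_num

lemma latEquiv_trans {U V W : Finset (ℤ × ℤ)} (h1 : LatEquiv U V) (h2 : LatEquiv V W) :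
    LatEquiv U W := by
  obtain ⟨a1, b1, c1, d1, e1, f1, hd1, hh1, _⟩ := hull_of_latEquiv h1
  obtain ⟨a2, b2, c2, d2, e2, f2, hd2, hh2, _⟩ := hull_of_latEquiv h2
  apply latEquiv_of_hull (det_comp_pm hd1 hd2)
  have : ⇑(umAff (a2*a1 + b2*c1) (a2*b1 + b2*d1) (c2*a1 + d2*c1) (c2*b1 + d2*d1)
      (a2*e1 + b2*f1 + e2) (c2*e1 + d2*f1 + f2))
      = ⇑(umAff a2 b2 c2 d2 e2 f2) ∘ ⇑(umAff a1 b1 c1 d1 e1 f1) :=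
    funext (umAff_comp a1 b1 c1 d1 e1 f1 a2 b2 c2 d2 e2 f2)
  rw [this, Set.image_comp, hh1, hh2]

lemma latEquiv_of_hull_eq {V W : Finset (ℤ × ℤ)} (h : polyHull V = polyHull W) :
    LatEquiv V W := by
  apply latEquiv_of_hull (a := 1) (b := 0) (c := 0) (d := 1) (e := 0) (f := 0)
    (Or.inl (by norm_num))
  have hid : ⇑(umAff 1 0 0 1 0 0) = id := by
    funext z
    simp [umAff_apply, Prod.ext_iff]
  rw [hid, Set.image_id, h]

lemma latEquiv_image (V : Finset (ℤ × ℤ)) (hdet : a * d - b * c = 1 ∨ a * d - b * c = -1) :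
    LatEquiv V (V.image (unimodMap a b c d e f)) :=
  latEquiv_of_hull hdet (polyHull_image V a b c d e f).symm

lemma intPts_finite (V : Finset (ℤ × ℤ)) : (intPts V).Finite := by
  set B : ℕ := V.sup (fun w => max w.1.natAbs w.2.natAbs) with hBd
  have hb : ∀ w ∈ V, ((w.1 : ℝ) ≤ (B:ℝ) ∧ -(B:ℝ) ≤ (w.1:ℝ)) ∧
      ((w.2 : ℝ) ≤ (B:ℝ) ∧ -(B:ℝ) ≤ (w.2:ℝ)) := by
    intro w hw
    have h1 : w.1.natAbs ≤ B := le_trans (le_max_left _ _)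
      (Finset.le_sup (f := fun w : ℤ × ℤ => max w.1.natAbs w.2.natAbs) hw)
    have h2 : w.2.natAbs ≤ B := le_trans (le_max_right _ _)
      (Finset.le_sup (f := fun w : ℤ × ℤ => max w.1.natAbs w.2.natAbs) hw)
    have h1' : |w.1| ≤ (B:ℤ) := by rw [Int.abs_eq_natAbs]; exact_mod_cast h1
    have h2' : |w.2| ≤ (B:ℤ) := by rw [Int.abs_eq_natAbs]; exact_mod_cast h2
    rw [abs_le] at h1' h2'
    constructor
    · constructor <;> [exact_mod_cast h1'.2; exact_mod_cast h1'.1]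
    · constructor <;> [exact_mod_cast h2'.2; exact_mod_cast h2'.1]
  have hsub : intPts V ⊆ (Set.Icc (-(B:ℤ)) (B:ℤ)) ×ˢ (Set.Icc (-(B:ℤ)) (B:ℤ)) := by
    intro m hm
    have hmQ : toR m ∈ polyHull V := interior_subset hm
    have c1 := hull_le_linear 1 0 (B:ℝ) V (fun w hw => by
      have := (hb w hw).1.1; linarith) _ hmQ
    have c2 := hull_le_linear (-1) 0 (B:ℝ) V (fun w hw => by
      have := (hb w hw).1.2; linarith) _ hmQ
    have c3 := hull_le_linear 0 1 (B:ℝ) V (fun w hw => by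
      have := (hb w hw).2.1; linarith) _ hmQ
    have c4 := hull_le_linear 0 (-1) (B:ℝ) V (fun w hw => by
      have := (hb w hw).2.2; linarith) _ hmQ
    simp only [toR, one_mul, zero_mul, add_zero, neg_mul, zero_add] at c1 c2 c3 c4
    constructor
    · rw [Set.mem_Icc]
      constructor
      · have : -(B:ℝ) ≤ (m.1:ℝ) := by linarith
        exact_mod_cast this
      · exact_mod_cast c1
    · rw [Set.mem_Icc]
      constructor
      · have : -(B:ℝ) ≤ (m.2:ℝ) := by linarith
        exact_mod_cast this
      · exact_mod_cast c3
  exact Set.Finite.subset ((Set.finite_Icc _ _).prod (Set.finite_Icc _ _)) hsub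

lemma comp_fin3 {α β : Type*} (F : α → β) (x y z : α) :
    F ∘ ![x, y, z] = ![F x, F y, F z] := by
  funext i
  fin_cases i <;> rfl

lemma isLatticePolygon_image (hU : UMPair a b c d e f a' b' c' d' e' f')
    (V : Finset (ℤ × ℤ)) (h : IsLatticePolygon V) :
    IsLatticePolygon (V.image (unimodMap a b c d e f)) := by
  obtain ⟨p, q, r, hp, hq, hr, hind⟩ := h
  have hinjR : Function.Injective (umAff a b c d e f) :=
    Function.LeftInverse.injective (g := umAff a' b' c' d' e' f') hU.liR
  refine ⟨unimodMap a b c d e f p, unimodMap a b c d e f q, unimodMap a b c d e f r,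
    Finset.mem_image_of_mem _ hp, Finset.mem_image_of_mem _ hq,
    Finset.mem_image_of_mem _ hr, ?_⟩
  have := hind.map' (umAff a b c d e f) hinjR
  rwa [comp_fin3, umAff_toR, umAff_toR, umAff_toR] at this

lemma maximalPoly_image (hU : UMPair a b c d e f a' b' c' d' e' f')
    (V : Finset (ℤ × ℤ)) (h : MaximalPoly V) :
    MaximalPoly (V.image (unimodMap a b c d e f)) := by
  obtain ⟨hpoly, hmax⟩ := h
  refine ⟨isLatticePolygon_image hU V hpoly, ?_⟩
  rintro ⟨W₁, hW₁poly, hstrict, hint⟩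
  apply hmax
  refine ⟨W₁.image (unimodMap a' b' c' d' e' f'), isLatticePolygon_image hU.symm W₁ hW₁poly,
    ?_, ?_⟩
  · -- polyHull V ⊂ polyHull (W₁.image σ')
    have hco : (⇑(umAff a' b' c' d' e' f') ∘ ⇑(umAff a b c d e f)) = id := funext hU.liR
    rw [polyHull_image] at hstrict
    have hVrel : polyHull V
        = umAff a' b' c' d' e' f' '' (umAff a b c d e f '' polyHull V) := by
      rw [← Set.image_comp, hco, Set.image_id]
    rw [hVrel, polyHull_image]
    have hinjR : Function.Injective (umAff a' b' c' d' e' f') :=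
      Function.LeftInverse.injective (g := umAff a b c d e f) hU.riR
    constructor
    · exact Set.image_mono hstrict.subset
    · intro hcon
      exact hstrict.not_subset ((Set.image_subset_image_iff hinjR).1 hcon)
  · rw [hU.symm.intPts_image W₁, hint, hU.intPts_image V, Set.image_image,
      show (fun p => unimodMap a' b' c' d' e' f' (unimodMap a b c d e f p)) = id from
        funext hU.li, Set.image_id]

lemma affind_horiz (x1 x2 x3 y0 y1 : ℝ) (hx : x1 ≠ x2) (hy : y0 ≠ y1) :
    AffineIndependent ℝ ![((x1, y0) : ℝ × ℝ), (x2, y0), (x3, y1)] := by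
  rw [affineIndependent_iff_not_collinear, range_fin3]
  intro hcol
  have hmem : ((x1, y0) : ℝ × ℝ) ∈ ({(x1, y0), (x2, y0), (x3, y1)} : Set (ℝ × ℝ)) := by simp
  rw [collinear_iff_of_mem hmem] at hcol
  obtain ⟨v, hv⟩ := hcol
  obtain ⟨r1, hr1⟩ := hv (x2, y0) (by simp)
  obtain ⟨r3, hr3⟩ := hv (x3, y1) (by simp)
  have h1 := congrArg Prod.fst hr1
  have h2 := congrArg Prod.snd hr1
  have h3 := congrArg Prod.snd hr3
  simp only [vadd_eq_add, Prod.fst_add, Prod.snd_add, Prod.smul_fst, Prod.smul_snd,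
    smul_eq_mul] at h1 h2 h3
  have hr1ne : r1 ≠ 0 := by
    intro hc
    rw [hc, zero_mul, zero_add] at h1
    exact hx h1.symm
  have hv2 : v.2 = 0 := by
    have : r1 * v.2 = 0 := by linarith
    rcases mul_eq_zero.1 this with h | h
    · exact absurd h hr1ne
    · exact h
  rw [hv2, mul_zero, zero_add] at h3
  exact hy h3.symm

end ForwardInfra

section Normalize

lemma normalizePoly (g : ℤ) (hg : 2 ≤ g) (V : Finset (ℤ × ℤ))
    (hfin : (intPts V).Finite) (hcard : ((intPts V).ncard : ℤ) = g)
    (hcol : Collinear ℝ (toR '' intPts V))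
    (hbet : ∀ x ∈ intPts V, ∀ y ∈ intPts V, ∀ z : ℤ × ℤ,
      toR z ∈ segment ℝ (toR x) (toR y) → z ∈ intPts V) :
    ∃ a b c d e f : ℤ, (a * d - b * c = 1 ∨ a * d - b * c = -1) ∧
      unimodMap a b c d e f '' intPts V = rowSet g := by
  have hcard2 : 1 < (intPts V).ncard := by omega
  obtain ⟨p, q, hp, hq, hpq⟩ := (Set.one_lt_ncard_iff hfin).1 hcard2
  set d1 : ℤ := q.1 - p.1 with hd1d
  set d2 : ℤ := q.2 - p.2 with hd2d
  have hdne : ¬(d1 = 0 ∧ d2 = 0) := by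
    rintro ⟨h1, h2⟩
    apply hpq
    rw [Prod.ext_iff]
    omega
  set h0 : ℕ := Int.gcd d1 d2 with hh0d
  have hh0 : 0 < h0 := Nat.pos_of_ne_zero fun hc => hdne (Int.gcd_eq_zero_iff.1 hc)
  set v1 : ℤ := d1 / (h0 : ℤ) with hv1d
  set v2 : ℤ := d2 / (h0 : ℤ) with hv2d
  have hd1 : (h0 : ℤ) * v1 = d1 := Int.mul_ediv_cancel' (Int.gcd_dvd_left d1 d2)
  have hd2 : (h0 : ℤ) * v2 = d2 := Int.mul_ediv_cancel' (Int.gcd_dvd_right d1 d2)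
  have hvgcd : Int.gcd v1 v2 = 1 := Int.gcd_div_gcd_div_gcd (by exact_mod_cast hh0)
  have hvne : ¬(v1 = 0 ∧ v2 = 0) := by
    rintro ⟨h1, h2⟩
    rw [h1, h2] at hvgcd
    simp [Int.gcd] at hvgcd
  set A : ℤ := Int.gcdA v1 v2 with hAd
  set B : ℤ := Int.gcdB v1 v2 with hBd
  have hbez : v1 * A + v2 * B = 1 := by
    have h := Int.gcd_eq_gcd_ab v1 v2
    rw [hvgcd] at h
    exact_mod_cast h.symm
  have hpmem : toR p ∈ toR '' intPts V := Set.mem_image_of_mem _ hp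
  rw [collinear_iff_of_mem hpmem] at hcol
  obtain ⟨v, hv⟩ := hcol
  obtain ⟨tq, htq⟩ := hv (toR q) (Set.mem_image_of_mem _ hq)
  have htq1 : ((q.1 : ℤ) : ℝ) = tq * v.1 + ((p.1 : ℤ) : ℝ) := by
    have := congrArg Prod.fst htq
    simpa [toR, vadd_eq_add] using this
  have htq2 : ((q.2 : ℤ) : ℝ) = tq * v.2 + ((p.2 : ℤ) : ℝ) := by
    have := congrArg Prod.snd htq
    simpa [toR, vadd_eq_add] using this
  have htqne : tq ≠ 0 := by
    intro hc
    apply hpq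
    rw [hc, zero_mul, zero_add] at htq1 htq2
    rw [Prod.ext_iff]
    constructor
    · exact_mod_cast htq1.symm
    · exact_mod_cast htq2.symm
  have key : ∀ s ∈ intPts V, ∃ n : ℤ, s.1 = p.1 + n * v1 ∧ s.2 = p.2 + n * v2 := by
    intro s hs
    obtain ⟨ts, hts⟩ := hv (toR s) (Set.mem_image_of_mem _ hs)
    have hts1 : ((s.1 : ℤ) : ℝ) = ts * v.1 + ((p.1 : ℤ) : ℝ) := by
      have := congrArg Prod.fst hts
      simpa [toR, vadd_eq_add] using this
    have hts2 : ((s.2 : ℤ) : ℝ) = ts * v.2 + ((p.2 : ℤ) : ℝ) := by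
      have := congrArg Prod.snd hts
      simpa [toR, vadd_eq_add] using this
    set τ : ℝ := ts / tq * (h0 : ℝ) with hτd
    have hd1R : (h0 : ℝ) * ((v1 : ℤ) : ℝ) = ((d1 : ℤ) : ℝ) := by exact_mod_cast hd1
    have hd2R : (h0 : ℝ) * ((v2 : ℤ) : ℝ) = ((d2 : ℤ) : ℝ) := by exact_mod_cast hd2
    have hd1R' : ((d1 : ℤ) : ℝ) = tq * v.1 := by
      rw [hd1d]; push_cast; linarith
    have hd2R' : ((d2 : ℤ) : ℝ) = tq * v.2 := by
      rw [hd2d]; push_cast; linarith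
    have hτ1 : ((s.1 : ℤ) : ℝ) - ((p.1 : ℤ) : ℝ) = τ * ((v1 : ℤ) : ℝ) := by
      have e1 : τ * ((v1 : ℤ) : ℝ) = ts / tq * ((h0 : ℝ) * ((v1:ℤ):ℝ)) := by
        rw [hτd]; ring
      rw [e1, hd1R, hd1R']
      have e2 : ts / tq * (tq * v.1) = ts * v.1 := by field_simp
      rw [e2]
      linarith
    have hτ2 : ((s.2 : ℤ) : ℝ) - ((p.2 : ℤ) : ℝ) = τ * ((v2 : ℤ) : ℝ) := by
      have e1 : τ * ((v2 : ℤ) : ℝ) = ts / tq * ((h0 : ℝ) * ((v2:ℤ):ℝ)) := by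
        rw [hτd]; ring
      rw [e1, hd2R, hd2R']
      have e2 : ts / tq * (tq * v.2) = ts * v.2 := by field_simp
      rw [e2]
      linarith
    set n : ℤ := A * (s.1 - p.1) + B * (s.2 - p.2) with hnd
    have hbezR : ((v1 : ℤ) : ℝ) * ((A:ℤ):ℝ) + ((v2 : ℤ) : ℝ) * ((B:ℤ):ℝ) = 1 := by
      exact_mod_cast hbez
    have hτn : τ = ((n : ℤ) : ℝ) := by
      have step : τ = ((A:ℤ):ℝ) * (τ * ((v1:ℤ):ℝ)) + ((B:ℤ):ℝ) * (τ * ((v2:ℤ):ℝ)) := by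
        linear_combination (-τ) * hbezR
      rw [step, ← hτ1, ← hτ2, hnd]
      push_cast
      ring
    refine ⟨n, ?_, ?_⟩
    · have : ((s.1 : ℤ) : ℝ) = ((p.1 + n * v1 : ℤ) : ℝ) := by
        push_cast
        rw [← hτn]
        linarith [hτ1]
      exact_mod_cast this
    · have : ((s.2 : ℤ) : ℝ) = ((p.2 + n * v2 : ℤ) : ℝ) := by
        push_cast
        rw [← hτn]
        linarith [hτ2]
      exact_mod_cast this
  set θ : ℤ → ℤ × ℤ := fun n => (p.1 + n * v1, p.2 + n * v2) with hθd
  set N : Set ℤ := θ ⁻¹' (intPts V) with hNd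
  have hθinj : Function.Injective θ := by
    intro n m hnm
    rw [hθd, Prod.ext_iff] at hnm
    simp only at hnm
    obtain ⟨h1, h2⟩ := hnm
    have e1 : (n - m) * v1 = 0 := by linarith
    have e2 : (n - m) * v2 = 0 := by linarith
    by_contra hne
    have hnm0 : n - m ≠ 0 := fun hc => hne (by omega)
    rcases mul_eq_zero.1 e1 with hc | hc1
    · exact hnm0 hc
    rcases mul_eq_zero.1 e2 with hc | hc2
    · exact hnm0 hc
    exact hvne ⟨hc1, hc2⟩
  have him : intPts V = θ '' N := by
    ext s
    constructor
    · intro hs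
      obtain ⟨n, h1, h2⟩ := key s hs
      have hsθ : θ n = s := by
        rw [hθd, Prod.ext_iff]
        exact ⟨h1.symm, h2.symm⟩
      exact ⟨n, by rw [hNd, Set.mem_preimage, hsθ]; exact hs, hsθ⟩
    · rintro ⟨n, hn, rfl⟩
      exact hn
  have hNfin : N.Finite := Set.Finite.preimage hθinj.injOn hfin
  have hNcard : N.ncard = g.toNat := by
    have h2 := hcard
    rw [him, Set.ncard_image_of_injective _ hθinj] at h2
    omega
  have hNne : N.Nonempty := Set.nonempty_of_ncard_ne_zero (by omega)
  set Nf := hNfin.toFinset with hNfd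
  have hNfne : Nf.Nonempty := by
    obtain ⟨x, hx⟩ := hNne
    exact ⟨x, hNfin.mem_toFinset.2 hx⟩
  set a₀ := Nf.min' hNfne with ha₀d
  set b₀ := Nf.max' hNfne with hb₀d
  have ha₀ : a₀ ∈ N := hNfin.mem_toFinset.1 (Nf.min'_mem hNfne)
  have hb₀ : b₀ ∈ N := hNfin.mem_toFinset.1 (Nf.max'_mem hNfne)
  have ha₀b₀ : a₀ ≤ b₀ := Nf.min'_le b₀ (Nf.max'_mem hNfne)
  have hbetN : ∀ m, a₀ ≤ m → m ≤ b₀ → m ∈ N := by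
    intro m h1 h2
    rcases eq_or_lt_of_le h1 with rfl | h1'
    · exact ha₀
    rcases eq_or_lt_of_le h2 with rfl | h2'
    · exact hb₀
    have ha₀' : θ a₀ ∈ intPts V := ha₀
    have hb₀' : θ b₀ ∈ intPts V := hb₀
    have hba : (0:ℝ) < (b₀ : ℝ) - (a₀ : ℝ) := by
      have : a₀ < b₀ := lt_trans h1' h2'
      have : (a₀ : ℝ) < (b₀ : ℝ) := by exact_mod_cast this
      linarith
    set μ : ℝ := ((m : ℝ) - (a₀ : ℝ)) / ((b₀ : ℝ) - (a₀ : ℝ)) with hμd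
    have h1R : (a₀ : ℝ) < (m : ℝ) := by exact_mod_cast h1'
    have h2R : (m : ℝ) < (b₀ : ℝ) := by exact_mod_cast h2'
    have hμ0 : 0 ≤ μ := div_nonneg (by linarith) (by linarith)
    have hμ1 : μ ≤ 1 := by rw [hμd, div_le_one hba]; linarith
    have hμc : μ * ((b₀:ℝ) - (a₀:ℝ)) = (m:ℝ) - (a₀:ℝ) := div_mul_cancel₀ _ (ne_of_gt hba)
    refine hbet (θ a₀) ha₀' (θ b₀) hb₀' (θ m) ⟨1 - μ, μ, by linarith, hμ0, by ring, ?_⟩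
    have hc : (1 - μ) • toR (θ a₀) + μ • toR (θ b₀)
        = ((1 - μ) * ((p.1 + a₀ * v1 : ℤ) : ℝ) + μ * ((p.1 + b₀ * v1 : ℤ) : ℝ),
           (1 - μ) * ((p.2 + a₀ * v2 : ℤ) : ℝ) + μ * ((p.2 + b₀ * v2 : ℤ) : ℝ)) := rfl
    rw [hc, Prod.ext_iff]
    constructor
    · show _ = ((p.1 + m * v1 : ℤ) : ℝ)
      push_cast
      linear_combination ((v1 : ℤ) : ℝ) * hμc
    · show _ = ((p.2 + m * v2 : ℤ) : ℝ)
      push_cast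
      linear_combination ((v2 : ℤ) : ℝ) * hμc
  have hN_Icc : N = ↑(Finset.Icc a₀ b₀) := by
    ext m
    rw [Finset.coe_Icc, Set.mem_Icc]
    constructor
    · intro hm
      exact ⟨Nf.min'_le m (hNfin.mem_toFinset.2 hm), Nf.le_max' m (hNfin.mem_toFinset.2 hm)⟩
    · rintro ⟨h1, h2⟩
      exact hbetN m h1 h2
  have hb₀a₀ : b₀ = a₀ + g - 1 := by
    have h2 : N.ncard = (Finset.Icc a₀ b₀).card := by rw [hN_Icc, Set.ncard_coe_finset]
    rw [Int.card_Icc] at h2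
    omega
  refine ⟨A, B, -v2, v1, 1 - a₀ - (A * p.1 + B * p.2), 1 - (-v2 * p.1 + v1 * p.2),
    Or.inl (by linear_combination hbez), ?_⟩
  rw [him, Set.image_image]
  have himθ : (fun n => unimodMap A B (-v2) v1 (1 - a₀ - (A * p.1 + B * p.2))
      (1 - (-v2 * p.1 + v1 * p.2)) (θ n)) = fun n => ((n - a₀ + 1, 1) : ℤ × ℤ) := by
    funext n
    simp only [unimodMap, hθd, Prod.ext_iff]
    constructor
    · show A * (p.1 + n * v1) + B * (p.2 + n * v2) + (1 - a₀ - (A * p.1 + B * p.2))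
        = n - a₀ + 1
      linear_combination n * hbez
    · show -v2 * (p.1 + n * v1) + v1 * (p.2 + n * v2) + (1 - (-v2 * p.1 + v1 * p.2)) = 1
      ring
  rw [himθ, hN_Icc]
  ext z
  simp only [Set.mem_image, Finset.coe_Icc, Set.mem_Icc, rowSet, Set.mem_setOf_eq]
  constructor
  · rintro ⟨n, ⟨hn1, hn2⟩, rfl⟩
    refine ⟨by omega, by omega, rfl⟩
  · rintro ⟨h1, h2, h3⟩
    refine ⟨z.1 + a₀ - 1, ⟨by omega, by omega⟩, ?_⟩
    rw [Prod.ext_iff]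
    exact ⟨by omega, h3.symm⟩

end Normalize

section Finish

lemma quadFinset_hull (P Q2 R S : ℤ) (hPQ : (P:ℝ) ≤ (Q2:ℝ)) (hRS : (R:ℝ) ≤ (S:ℝ)) :
    polyHull ({(P,0), (Q2,0), (R,2), (S,2)} : Finset (ℤ × ℤ))
      = quadR (P:ℝ) (Q2:ℝ) (R:ℝ) (S:ℝ) := by
  have himg : toR '' (↑({(P,0), (Q2,0), (R,2), (S,2)} : Finset (ℤ × ℤ)) : Set (ℤ × ℤ)) =
      ({((P:ℝ), (0:ℝ)), ((Q2:ℝ), 0), ((R:ℝ), 2), ((S:ℝ), 2)} : Set (ℝ × ℝ)) := by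
    ext z
    simp only [Finset.coe_insert, Finset.coe_singleton, Set.image_insert_eq,
      Set.image_singleton, Set.mem_insert_iff, Set.mem_singleton_iff, toR]
    push_cast
    tauto
  unfold polyHull
  rw [himg, quadHull _ _ _ _ hPQ hRS]

lemma finishShear (g : ℤ) (hg : 2 ≤ g) (P Q2 : ℤ) (hPQ : P ≤ Q2)
    (h1 : g + 1 ≤ Q2 - P) :
    ({(P,0), (Q2,0), (-P,2), (2*g+2-Q2,2)} : Finset (ℤ × ℤ)).image
      (unimodMap 1 P 0 1 (-P) 0) = EkVerts g (Q2 - P - g) := by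
  ext x
  simp only [Finset.mem_image, Finset.mem_insert, Finset.mem_singleton, EkVerts, unimodMap]
  constructor
  · rintro ⟨w, (rfl | rfl | rfl | rfl), rfl⟩ <;>
      simp only [Prod.ext_iff, Prod.fst, Prod.snd] <;> omega
  · rintro (rfl | rfl | rfl | rfl)
    · exact ⟨(P, 0), Or.inl rfl, by simp [Prod.ext_iff]⟩
    · refine ⟨(-P, 2), Or.inr (Or.inr (Or.inl rfl)), ?_⟩
      simp [Prod.ext_iff]; ring
    · refine ⟨(Q2, 0), Or.inr (Or.inl rfl), ?_⟩
      simp [Prod.ext_iff]; omega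
    · refine ⟨(2*g+2-Q2, 2), Or.inr (Or.inr (Or.inr rfl)), ?_⟩
      simp [Prod.ext_iff]; omega

lemma near_interior {Q : Set (ℝ × ℝ)} {x y : ℝ} (h : ((x:ℝ), (y:ℝ)) ∈ interior Q) :
    ∃ ε : ℝ, 0 < ε ∧ ((x:ℝ), y + ε) ∈ Q ∧ ((x:ℝ), y - ε) ∈ Q := by
  rw [mem_interior_iff_mem_nhds, Metric.mem_nhds_iff] at h
  obtain ⟨ε, hε, hb⟩ := h
  have key : ∀ δ : ℝ, |δ| < ε → ((x:ℝ), y + δ) ∈ Q := by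
    intro δ hδ
    apply hb
    rw [Metric.mem_ball, Prod.dist_eq]
    apply max_lt
    · show dist x x < ε
      rw [dist_self]; exact hε
    · show dist (y + δ) y < ε
      rw [Real.dist_eq, show y + δ - y = δ by ring]
      exact hδ
  refine ⟨ε/2, by linarith, key (ε/2) ?_, ?_⟩
  · rw [abs_of_pos (by linarith)]; linarith
  · have := key (-(ε/2)) (by rw [abs_neg, abs_of_pos (by linarith)]; linarith)
    simpa [sub_eq_add_neg] using this

end Finish

section ForwardMain

lemma forward_dir (g : ℤ) (hg : 2 ≤ g) (V : Finset (ℤ × ℤ))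
    (hcard : ((intPts V).ncard : ℤ) = g) (hhyp : Hyperelliptic V) (hmax : MaximalPoly V) :
    ∃ k : ℤ, 1 ≤ k ∧ k ≤ g + 2 ∧ LatEquiv V (EkVerts g k) := by
  have hfin : (intPts V).Finite := intPts_finite V
  have hbet : ∀ x ∈ intPts V, ∀ y ∈ intPts V, ∀ z : ℤ × ℤ,
      toR z ∈ segment ℝ (toR x) (toR y) → z ∈ intPts V := by
    intro x hx y hy z hz
    have hconv : Convex ℝ (interior (polyHull V)) := (convex_convexHull ℝ _).interior
    exact hconv.segment_subset hx hy hz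
  obtain ⟨a1, b1, c1, d1, e1, f1, hdet1, hnorm⟩ := normalizePoly g hg V hfin hcard hhyp.2 hbet
  obtain ⟨a1', b1', c1', d1', e1', f1', hU1⟩ := exists_umpair (e := e1) (f := f1) hdet1
  set V₁ := V.image (unimodMap a1 b1 c1 d1 e1 f1) with hV₁d
  have hV₁int : intPts V₁ = rowSet g := by rw [hU1.intPts_image V, hnorm]
  have hV₁max : MaximalPoly V₁ := maximalPoly_image hU1 V hmax
  have hVV₁ : LatEquiv V V₁ := latEquiv_image V hdet1
  set Q := polyHull V₁ with hQd
  have hQconv : Convex ℝ Q := convex_convexHull _ _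
  have hrow : ∀ m : ℤ × ℤ, toR m ∈ interior Q → 1 ≤ m.1 ∧ m.1 ≤ g ∧ m.2 = 1 := by
    intro m hm
    have : m ∈ intPts V₁ := hm
    rw [hV₁int] at this
    exact this
  have h11 : ((1:ℝ), (1:ℝ)) ∈ interior Q := by
    have : ((1,1) : ℤ × ℤ) ∈ intPts V₁ := by rw [hV₁int]; exact ⟨le_refl 1, by omega, rfl⟩
    have h2 : toR ((1,1) : ℤ × ℤ) ∈ interior Q := this
    simpa [toR] using h2
  have hg1 : (((g:ℤ):ℝ), (1:ℝ)) ∈ interior Q := by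
    have : ((g,1) : ℤ × ℤ) ∈ intPts V₁ := by rw [hV₁int]; exact ⟨by omega, le_refl g, rfl⟩
    have h2 : toR ((g,1) : ℤ × ℤ) ∈ interior Q := this
    simpa [toR] using h2
  have hgR : (2:ℝ) ≤ (g:ℝ) := by exact_mod_cast hg
  -- slab bound on generators
  have hy : ∀ w ∈ V₁, 0 ≤ w.2 ∧ w.2 ≤ 2 := by
    intro w hw
    have hwQ : toR w ∈ Q := subset_convexHull _ _ (Set.mem_image_of_mem _ hw)
    have hwtoR : toR w = (((w.1:ℤ):ℝ), ((w.2:ℤ):ℝ)) := rfl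
    constructor
    · by_contra hc
      push_neg at hc
      obtain ⟨m, hm⟩ := newpt_down hQconv hg h11 hg1 (by omega : w.2 ≤ -1) (hwtoR ▸ hwQ)
      have hm' : toR ((m, 0) : ℤ × ℤ) ∈ interior Q := by simpa [toR] using hm
      have := (hrow (m, 0) hm').2.2
      norm_num at this
    · by_contra hc
      push_neg at hc
      obtain ⟨m, hm⟩ := newpt hQconv hg h11 hg1 (by omega : 3 ≤ w.2) (hwtoR ▸ hwQ)
      have hm' : toR ((m, 2) : ℤ × ℤ) ∈ interior Q := by simpa [toR] using hm
      have := (hrow (m, 2) hm').2.2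
      norm_num at this
  -- real slice bound at height one
  have hslice : ∀ x : ℝ, ((x, (1:ℝ)) : ℝ × ℝ) ∈ Q → 0 ≤ x ∧ x ≤ (g:ℝ) + 1 := by
    intro x hx
    constructor
    · by_contra hc
      push_neg at hc
      have hint := between_interior hQconv h11 hx (Or.inr ⟨hc, by norm_num⟩)
      have h2 : toR ((0,1) : ℤ × ℤ) ∈ interior Q := by simpa [toR] using hint
      have := (hrow (0,1) h2).1
      norm_num at this
    · by_contra hc
      push_neg at hc
      have hint := between_interior hQconv hg1 hx (Or.inl ⟨by linarith, hc⟩)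
      have h2 : toR ((g+1,1) : ℤ × ℤ) ∈ interior Q := by
        have : (((g+1:ℤ):ℝ), ((1:ℤ):ℝ)) ∈ interior Q := by push_cast; exact hint
        simpa [toR] using this
      have := (hrow (g+1,1) h2).2.1
      omega
  -- top and bottom rows of generators are nonempty
  obtain ⟨ε, hε, hup, hdown⟩ := near_interior h11
  have htop : ∃ w ∈ V₁, w.2 = 2 := by
    by_contra hc
    push_neg at hc
    have hle := hull_le_linear 0 1 1 V₁ (fun w hw => by
      have h2 := (hy w hw).2
      have h3 := hc w hw
      have : w.2 ≤ 1 := by omega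
      have : ((w.2:ℤ):ℝ) ≤ 1 := by exact_mod_cast this
      linarith) _ hup
    simp at hle
    linarith
  have hbot : ∃ w ∈ V₁, w.2 = 0 := by
    by_contra hc
    push_neg at hc
    have hle := hull_le_linear 0 (-1) (-1) V₁ (fun w hw => by
      have h2 := (hy w hw).1
      have h3 := hc w hw
      have : 1 ≤ w.2 := by omega
      have : (1:ℝ) ≤ ((w.2:ℤ):ℝ) := by exact_mod_cast this
      linarith) _ hdown
    simp at hle
    linarith
  -- extreme generators on each row
  obtain ⟨wb, hwb, hwb2⟩ := hbot
  obtain ⟨wt, hwt, hwt2⟩ := htop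
  set Bf := V₁.filter (fun w => w.2 = 0) with hBfd
  set Tf := V₁.filter (fun w => w.2 = 2) with hTfd
  have hBfne : (Bf.image Prod.fst).Nonempty :=
    ⟨wb.1, Finset.mem_image_of_mem _ (Finset.mem_filter.2 ⟨hwb, hwb2⟩)⟩
  have hTfne : (Tf.image Prod.fst).Nonempty :=
    ⟨wt.1, Finset.mem_image_of_mem _ (Finset.mem_filter.2 ⟨hwt, hwt2⟩)⟩
  set pB := (Bf.image Prod.fst).min' hBfne with hpBd
  set qB := (Bf.image Prod.fst).max' hBfne with hqBd
  set rT := (Tf.image Prod.fst).min' hTfne with hrTd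
  set sT := (Tf.image Prod.fst).max' hTfne with hsTd
  have hpBqB : pB ≤ qB := (Bf.image Prod.fst).min'_le qB ((Bf.image Prod.fst).max'_mem hBfne)
  have hrTsT : rT ≤ sT := (Tf.image Prod.fst).min'_le sT ((Tf.image Prod.fst).max'_mem hTfne)
  -- membership of extreme points as lattice points of Q
  have hmemRow : ∀ x : ℤ, x ∈ Bf.image Prod.fst → ((x,0) : ℤ × ℤ) ∈ V₁ := by
    intro x hx
    obtain ⟨w, hw, rfl⟩ := Finset.mem_image.1 hx
    obtain ⟨hw1, hw2⟩ := Finset.mem_filter.1 hw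
    have : w = (w.1, 0) := by rw [Prod.ext_iff]; exact ⟨rfl, hw2⟩
    rwa [← this]
  have hmemRowT : ∀ x : ℤ, x ∈ Tf.image Prod.fst → ((x,2) : ℤ × ℤ) ∈ V₁ := by
    intro x hx
    obtain ⟨w, hw, rfl⟩ := Finset.mem_image.1 hx
    obtain ⟨hw1, hw2⟩ := Finset.mem_filter.1 hw
    have : w = (w.1, 2) := by rw [Prod.ext_iff]; exact ⟨rfl, hw2⟩
    rwa [← this]
  have hpBQ : (((pB:ℤ):ℝ), (0:ℝ)) ∈ Q := by
    have := subset_convexHull ℝ _ (Set.mem_image_of_mem toR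
      (Finset.mem_coe.2 (hmemRow pB ((Bf.image Prod.fst).min'_mem hBfne))))
    simpa [toR, hQd, polyHull] using this
  have hqBQ : (((qB:ℤ):ℝ), (0:ℝ)) ∈ Q := by
    have := subset_convexHull ℝ _ (Set.mem_image_of_mem toR
      (Finset.mem_coe.2 (hmemRow qB ((Bf.image Prod.fst).max'_mem hBfne))))
    simpa [toR, hQd, polyHull] using this
  have hrTQ : (((rT:ℤ):ℝ), (2:ℝ)) ∈ Q := by
    have := subset_convexHull ℝ _ (Set.mem_image_of_mem toR
      (Finset.mem_coe.2 (hmemRowT rT ((Tf.image Prod.fst).min'_mem hTfne))))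
    simpa [toR, hQd, polyHull] using this
  have hsTQ : (((sT:ℤ):ℝ), (2:ℝ)) ∈ Q := by
    have := subset_convexHull ℝ _ (Set.mem_image_of_mem toR
      (Finset.mem_coe.2 (hmemRowT sT ((Tf.image Prod.fst).max'_mem hTfne))))
    simpa [toR, hQd, polyHull] using this
  -- bounds on generators row by row
  have hrowB : ∀ w ∈ V₁, w.2 = 0 → pB ≤ w.1 ∧ w.1 ≤ qB := by
    intro w hw hw2
    have hmem : w.1 ∈ Bf.image Prod.fst :=
      Finset.mem_image_of_mem _ (Finset.mem_filter.2 ⟨hw, hw2⟩)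
    exact ⟨(Bf.image Prod.fst).min'_le _ hmem, (Bf.image Prod.fst).le_max' _ hmem⟩
  have hrowT : ∀ w ∈ V₁, w.2 = 2 → rT ≤ w.1 ∧ w.1 ≤ sT := by
    intro w hw hw2
    have hmem : w.1 ∈ Tf.image Prod.fst :=
      Finset.mem_image_of_mem _ (Finset.mem_filter.2 ⟨hw, hw2⟩)
    exact ⟨(Tf.image Prod.fst).min'_le _ hmem, (Tf.image Prod.fst).le_max' _ hmem⟩
  have hrowM : ∀ w ∈ V₁, w.2 = 1 → 0 ≤ w.1 ∧ w.1 ≤ g + 1 := by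
    intro w hw hw2
    have hwQ : toR w ∈ Q := subset_convexHull _ _ (Set.mem_image_of_mem _ hw)
    have hwQ' : (((w.1:ℤ):ℝ), (1:ℝ)) ∈ Q := by
      have : toR w = (((w.1:ℤ):ℝ), ((w.2:ℤ):ℝ)) := rfl
      rw [this, hw2] at hwQ
      simpa using hwQ
    obtain ⟨hs1, hs2⟩ := hslice _ hwQ'
    constructor
    · exact_mod_cast hs1
    · have : ((w.1:ℤ):ℝ) ≤ ((g+1 : ℤ):ℝ) := by push_cast; linarith
      exact_mod_cast this
  -- midpoint constraints
  have hpr : 0 ≤ pB + rT := by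
    have hmid := midpt_mem hQconv hpBQ hrTQ
    simp only at hmid
    have hmid' : (((pB:ℝ) + rT)/2, (1:ℝ)) ∈ Q := by
      have : (((pB:ℝ) + (rT:ℝ))/2, ((0:ℝ) + 2)/2) = (((pB:ℝ) + rT)/2, (1:ℝ)) := by norm_num
      rwa [this] at hmid
    have := (hslice _ hmid').1
    have h2 : (0:ℝ) ≤ ((pB + rT : ℤ):ℝ) := by push_cast; linarith
    exact_mod_cast h2
  have hqs : qB + sT ≤ 2*g + 2 := by
    have hmid := midpt_mem hQconv hqBQ hsTQ
    simp only at hmid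
    have hmid' : (((qB:ℝ) + sT)/2, (1:ℝ)) ∈ Q := by
      have : (((qB:ℝ) + (sT:ℝ))/2, ((0:ℝ) + 2)/2) = (((qB:ℝ) + sT)/2, (1:ℝ)) := by norm_num
      rwa [this] at hmid
    have := (hslice _ hmid').2
    have h2 : ((qB + sT : ℤ):ℝ) ≤ ((2*g+2 : ℤ):ℝ) := by push_cast; linarith
    exact_mod_cast h2
  -- the enclosing quadrilateral
  set P : ℤ := pB with hPd
  set Q2 : ℤ := qB with hQ2d
  have hPa : P ≤ pB := le_refl _
  have hQ2a : qB ≤ Q2 := le_refl _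
  have hPQ2 : P ≤ Q2 := hpBqB
  have hQ2P : Q2 - P ≤ 2*g+2 := by omega
  have hRS : -P ≤ 2*g+2-Q2 := by omega
  have hsTle : sT ≤ 2*g+2-Q2 := by omega
  have hrTge : -P ≤ rT := by omega
  set W₂ : Finset (ℤ × ℤ) := {(P,0), (Q2,0), (-P,2), (2*g+2-Q2,2)} with hW₂d
  have hW₂hull : polyHull W₂ = quadR (P:ℝ) (Q2:ℝ) ((-P : ℤ):ℝ) ((2*g+2-Q2 : ℤ):ℝ) :=
    quadFinset_hull P Q2 (-P) (2*g+2-Q2) (by exact_mod_cast hPQ2) (by exact_mod_cast hRS)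
  have hcast1 : ((-P : ℤ):ℝ) = -(P:ℝ) := by push_cast; ring
  have hcast2 : ((2*g+2-Q2 : ℤ):ℝ) = 2*(g:ℝ)+2-(Q2:ℝ) := by push_cast; ring
  have hW₂hull' : polyHull W₂ = quadR (P:ℝ) (Q2:ℝ) (-(P:ℝ)) (2*(g:ℝ)+2-(Q2:ℝ)) := by
    rw [hW₂hull, hcast1, hcast2]
  have hW₂int : intPts W₂ = rowSet g := quad_intPts g W₂ (P:ℝ) (Q2:ℝ) hW₂hull'
  -- V₁ is contained in the quadrilateral
  have hsubQ : Q ⊆ polyHull W₂ := by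
    rw [hW₂hull']
    apply convexHull_min _ (quadR_convex _ _ _ _)
    rintro _ ⟨w, hw, rfl⟩
    have hw' : w ∈ V₁ := hw
    have hy' := hy w hw'
    have hcases : w.2 = 0 ∨ w.2 = 1 ∨ w.2 = 2 := by omega
    have htoR : toR w = (((w.1:ℤ):ℝ), ((w.2:ℤ):ℝ)) := rfl
    rcases hcases with h2 | h2 | h2
    · obtain ⟨hb1, hb2⟩ := hrowB w hw' h2
      have c1 : (P:ℝ) ≤ (w.1:ℝ) := by exact_mod_cast le_trans hPa hb1
      have c2 : (w.1:ℝ) ≤ (Q2:ℝ) := by exact_mod_cast le_trans hb2 hQ2a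
      rw [htoR, h2]
      exact ⟨by norm_num, by norm_num, by push_cast; linarith, by push_cast; linarith⟩
    · obtain ⟨hb1, hb2⟩ := hrowM w hw' h2
      have c1 : (0:ℝ) ≤ (w.1:ℝ) := by exact_mod_cast hb1
      have c2 : (w.1:ℝ) ≤ (g:ℝ)+1 := by
        have : ((w.1 : ℤ):ℝ) ≤ ((g+1 : ℤ):ℝ) := by exact_mod_cast hb2
        push_cast at this; linarith
      rw [htoR, h2]
      refine ⟨by norm_num, by norm_num, ?_, ?_⟩
      · push_cast; nlinarith
      · push_cast; nlinarith
    · obtain ⟨hb1, hb2⟩ := hrowT w hw' h2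
      have c1 : (-(P:ℝ)) ≤ (w.1:ℝ) := by
        have : ((-P : ℤ):ℝ) ≤ ((w.1 : ℤ):ℝ) := by exact_mod_cast le_trans hrTge hb1
        push_cast at this; linarith
      have c2 : (w.1:ℝ) ≤ 2*(g:ℝ)+2-(Q2:ℝ) := by
        have : ((w.1 : ℤ):ℝ) ≤ ((2*g+2-Q2 : ℤ):ℝ) := by exact_mod_cast le_trans hb2 hsTle
        push_cast at this; linarith
      rw [htoR, h2]
      refine ⟨by norm_num, by norm_num, ?_, ?_⟩
      · push_cast; nlinarith
      · push_cast; nlinarith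
  -- the quadrilateral is a lattice polygon
  have hW₂poly : IsLatticePolygon W₂ := by
    rcases eq_or_lt_of_le hPQ2 with heq | hlt
    · -- degenerate bottom, use the top edge
      refine ⟨(-P,2), (2*g+2-Q2,2), (P,0), by simp [hW₂d], by simp [hW₂d], by simp [hW₂d], ?_⟩
      have hmat : ![toR ((-P,2) : ℤ × ℤ), toR ((2*g+2-Q2,2) : ℤ × ℤ), toR ((P,0) : ℤ × ℤ)]
          = ![((-(P:ℝ)), (2:ℝ)), ((2*(g:ℝ)+2-Q2), (2:ℝ)), (((P:ℝ)), (0:ℝ))] := by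
        funext i
        fin_cases i <;> simp [toR] <;> push_cast <;> norm_num
      rw [hmat]
      apply affind_horiz
      · intro hc
        have : -(P:ℝ) = 2*(g:ℝ)+2-(Q2:ℝ) := hc
        have h2 : (Q2:ℝ) - (P:ℝ) = 2*(g:ℝ)+2 := by linarith
        have h3 : ((Q2 - P : ℤ):ℝ) = ((2*g+2 : ℤ):ℝ) := by push_cast; linarith
        have h4 : Q2 - P = 2*g+2 := by exact_mod_cast h3
        omega
      · norm_num
    · refine ⟨(P,0), (Q2,0), (-P,2), by simp [hW₂d], by simp [hW₂d], by simp [hW₂d], ?_⟩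
      have hmat : ![toR ((P,0) : ℤ × ℤ), toR ((Q2,0) : ℤ × ℤ), toR ((-P,2) : ℤ × ℤ)]
          = ![(((P:ℝ)), (0:ℝ)), (((Q2:ℝ)), (0:ℝ)), ((-(P:ℝ)), (2:ℝ))] := by
        funext i
        fin_cases i <;> simp [toR] <;> push_cast <;> norm_num
      rw [hmat]
      apply affind_horiz
      · intro hc
        have : (P:ℝ) = (Q2:ℝ) := hc
        have : P = Q2 := by exact_mod_cast this
        omega
      · norm_num
  -- maximality forces equality of hulls
  have hQeq : Q = polyHull W₂ := by
    by_contra hne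
    exact hV₁max.2 ⟨W₂, hW₂poly, ⟨hsubQ, fun hsub' => hne (le_antisymm hsubQ hsub')⟩,
      by rw [hW₂int, hV₁int]⟩
  have hVW₂ : LatEquiv V W₂ := latEquiv_trans hVV₁ (latEquiv_of_hull_eq hQeq)
  -- final shear (after an optional flip)
  rcases le_or_gt (g + 1) (Q2 - P) with hcaseA | hcaseB
  · refine ⟨Q2 - P - g, by omega, by omega, ?_⟩
    have hLE2 : LatEquiv W₂ (EkVerts g (Q2 - P - g)) := by
      have h := latEquiv_image (a := 1) (b := P) (c := 0) (d := 1) (e := -P) (f := 0) W₂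
        (Or.inl (by ring))
      rwa [hW₂d, finishShear g hg P Q2 hPQ2 hcaseA] at h
    exact latEquiv_trans hVW₂ hLE2
  · -- flip then shear
    set P' : ℤ := Q2 - g - 1 with hP'd
    set Q2' : ℤ := g + 1 + P with hQ2'd
    have hflipdet : (-1 : ℤ) * (-1) - 0 * 0 = 1 ∨ (-1 : ℤ) * (-1) - 0 * 0 = -1 :=
      Or.inl (by ring)
    have hW₃eq : W₂.image (unimodMap (-1) 0 0 (-1) (g+1) 2)
        = ({(P',0), (Q2',0), (-P',2), (2*g+2-Q2',2)} : Finset (ℤ × ℤ)) := by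
      ext x
      simp only [hW₂d, Finset.mem_image, Finset.mem_insert, Finset.mem_singleton, unimodMap]
      constructor
      · rintro ⟨w, (rfl | rfl | rfl | rfl), rfl⟩ <;>
          simp only [Prod.ext_iff, Prod.fst, Prod.snd] <;> omega
      · rintro (rfl | rfl | rfl | rfl)
        · refine ⟨(2*g+2-Q2, 2), Or.inr (Or.inr (Or.inr rfl)), ?_⟩
          simp [Prod.ext_iff]; omega
        · refine ⟨(-P, 2), Or.inr (Or.inr (Or.inl rfl)), ?_⟩
          simp [Prod.ext_iff]; omega
        · refine ⟨(Q2, 0), Or.inr (Or.inl rfl), ?_⟩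
          simp [Prod.ext_iff]; omega
        · refine ⟨(P, 0), Or.inl rfl, ?_⟩
          simp [Prod.ext_iff]; omega
    have hLEflip : LatEquiv W₂ ({(P',0), (Q2',0), (-P',2), (2*g+2-Q2',2)} : Finset (ℤ × ℤ)) := by
      have h := latEquiv_image (a := -1) (b := 0) (c := 0) (d := -1) (e := g+1) (f := 2) W₂
        hflipdet
      rwa [hW₃eq] at h
    have hP'Q2' : P' ≤ Q2' := by omega
    have hcaseA' : g + 1 ≤ Q2' - P' := by omega
    refine ⟨Q2' - P' - g, by omega, by omega, ?_⟩
    have hLE2 : LatEquiv ({(P',0), (Q2',0), (-P',2), (2*g+2-Q2',2)} : Finset (ℤ × ℤ))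
        (EkVerts g (Q2' - P' - g)) := by
      have h := latEquiv_image (a := 1) (b := P') (c := 0) (d := 1) (e := -P') (f := 0)
        ({(P',0), (Q2',0), (-P',2), (2*g+2-Q2',2)} : Finset (ℤ × ℤ)) (Or.inl (by ring))
      rwa [finishShear g hg P' Q2' hP'Q2' hcaseA'] at h
    exact latEquiv_trans hVW₂ (latEquiv_trans hLEflip hLE2)

end ForwardMain

/-- Up to lattice equivalence, the maximal hyperelliptic
lattice polygons of genus `g ≥ 2` are exactly the `g + 2` polygons
`E_k = conv((0,0),(0,2),(g+k,0),(g+2-k,2))`, `1 ≤ k ≤ g+2`; these are pairwise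
inequivalent, and each `E_k` has exactly the `g` interior lattice points
`(1,1), …, (g,1)`. -/
theorem maximal_hyperelliptic_classification (g : ℤ) (hg : 2 ≤ g) :
    (∀ V : Finset (ℤ × ℤ),
      (IsLatticePolygon V ∧ ((intPts V).ncard : ℤ) = g ∧ Hyperelliptic V ∧
        MaximalPoly V) ↔
      ∃ k : ℤ, 1 ≤ k ∧ k ≤ g + 2 ∧ LatEquiv V (EkVerts g k)) ∧
    (∀ k k' : ℤ, 1 ≤ k → k ≤ g + 2 → 1 ≤ k' → k' ≤ g + 2 →
      LatEquiv (EkVerts g k) (EkVerts g k') → k = k') ∧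
    (∀ k : ℤ, 1 ≤ k → k ≤ g + 2 →
      intPts (EkVerts g k) = {p : ℤ × ℤ | 1 ≤ p.1 ∧ p.1 ≤ g ∧ p.2 = 1}) := by
  refine ⟨fun V => ⟨?_, ?_⟩, ?_, ?_⟩
  · rintro ⟨hpoly, hcard, hhyp, hmax⟩
    exact forward_dir g hg V hcard hhyp hmax
  · rintro ⟨k, hk1, hk2, hLE⟩
    exact backward_dir g k hg hk1 hk2 V hLE
  · intro k k' hk1 hk2 hk1' hk2' h
    exact part2 g hg k k' hk1 hk2 hk1' hk2' h
  · intro k hk1 hk2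
    rw [ek_intPts g k hg hk1 hk2]
    rfl
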